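/- arXiv:1211.1514 — 5 statements merged into one kernel-verified Lean document; each statement's English description precedes it below -/
import Mathlib

section
/- Let α > 1, β > 1 with α + β = 2* where 2* = 2N/(N-2), N ≥ 3. For every ε > 0 there is a constant C > 0 (depending only on α, β, ε) such that for all real numbers a₁, a₂, b₁, b₂: | |a₁+a₂|^α |b₁+b₂|^β − |a₁|^α |b₁|^β | ≤ C ε (|a₁|^{2*} + |a₂|^{2*} + |b₁|^{2*} + |b₂|^{2*}) + C ε^{1−2*} (|a₂|^{2*} + |b₂|^{2*}). -/
open Real

noncomputable section

-- tangent line inequality: for 0 ≤ y ≤ x, 1 ≤ p:  x^p - y^p ≤ p * x^(p-1) * (x - y)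
theorem aux_tangent {p x y : ℝ} (hp : 1 ≤ p) (hy : 0 ≤ y) (hyx : y ≤ x) :
    x ^ p - y ^ p ≤ p * x ^ (p - 1) * (x - y) := by
  have hx : 0 ≤ x := hy.trans hyx
  rcases eq_or_lt_of_le hx with h0 | hx0
  · have hx0 : x = 0 := h0.symm
    have hy0 : y = 0 := le_antisymm (hyx.trans_eq hx0) hy
    subst hx0; subst hy0
    simp [Real.zero_rpow (by positivity : p ≠ 0)]
  · have hs : (-1:ℝ) ≤ y / x - 1 := by
      have : 0 ≤ y / x := div_nonneg hy hx0.le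
      linarith
    have hb := one_add_mul_self_le_rpow_one_add hs hp
    rw [add_sub_cancel] at hb
    have hdiv : (y / x) ^ p = y ^ p / x ^ p := Real.div_rpow hy hx0.le p
    rw [hdiv] at hb
    have hxp : (0:ℝ) < x ^ p := Real.rpow_pos_of_pos hx0 p
    have hb2 : (1 + p * (y / x - 1)) * x ^ p ≤ y ^ p :=
      (le_div_iff₀ hxp).mp hb
    have hxp1 : x ^ (p - 1) * x = x ^ p := by
      rw [← Real.rpow_add_one hx0.ne' (p-1)]; ring_nf
    have hxy : x ^ p * (y / x) = x ^ (p - 1) * y := by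
      rw [← hxp1]; field_simp
    nlinarith [hb2, hxp, hxy]

theorem aux_diff {p : ℝ} (hp : 1 ≤ p) {x y m : ℝ} (hx : 0 ≤ x) (hy : 0 ≤ y)
    (hxm : x ≤ m) (hym : y ≤ m) : |x ^ p - y ^ p| ≤ p * m ^ (p - 1) * |x - y| := by
  have hm : 0 ≤ m := hx.trans hxm
  have key : ∀ u v : ℝ, 0 ≤ u → 0 ≤ v → v ≤ u → u ≤ m →
      u ^ p - v ^ p ≤ p * m ^ (p - 1) * (u - v) := by
    intro u v hu hv hvu hum
    have h1 := aux_tangent hp hv hvu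
    have h2 : u ^ (p - 1) ≤ m ^ (p - 1) :=
      Real.rpow_le_rpow hu hum (by linarith)
    have h3 : u ^ (p-1) * (u - v) ≤ m ^ (p-1) * (u - v) :=
      mul_le_mul_of_nonneg_right h2 (sub_nonneg.mpr hvu)
    nlinarith [(by linarith : (0:ℝ) ≤ p)]
  rcases le_total y x with h | h
  · have h1 : y ^ p ≤ x ^ p := Real.rpow_le_rpow hy h (by linarith)
    rw [abs_of_nonneg (by linarith), abs_of_nonneg (by linarith)]
    exact key x y hx hy h hxm
  · have h1 : x ^ p ≤ y ^ p := Real.rpow_le_rpow hx h (by linarith)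
    rw [abs_of_nonpos (by linarith), abs_of_nonpos (by linarith)]
    have := key y x hy hx h hym
    linarith

theorem aux_young {p x y ε : ℝ} (hp : 1 < p) (hx : 0 ≤ x) (hy : 0 ≤ y) (hε : 0 < ε) :
    x ^ (p - 1) * y ≤ ε * x ^ p + ε ^ (1 - p) * y ^ p := by
  have hp0 : (0:ℝ) < p := by linarith
  have hεp : (0:ℝ) < ε ^ (1 - p) := Real.rpow_pos_of_pos hε _
  have hw : (p - 1) / p + 1 / p = 1 := by field_simp; ring
  have hgm := Real.geom_mean_le_arith_mean2_weighted
    (by apply div_nonneg <;> linarith) (by positivity : (0:ℝ) ≤ 1/p)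
    (by positivity : (0:ℝ) ≤ ε * x ^ p) (by positivity : (0:ℝ) ≤ ε ^ (1-p) * y ^ p) hw
  have h1 : (ε * x ^ p) ^ ((p-1)/p) * (ε ^ (1-p) * y ^ p) ^ (1/p)
      = x ^ (p - 1) * y := by
    rw [Real.mul_rpow hε.le (by positivity), Real.mul_rpow hεp.le (by positivity),
      ← Real.rpow_mul hx, ← Real.rpow_mul hy,
      ← Real.rpow_mul hε.le]
    have e1 : p * ((p-1)/p) = p - 1 := by field_simp
    have e2 : p * (1/p) = 1 := by field_simp
    have e4 : ε ^ ((p-1)/p) * ε ^ ((1-p)*(1/p)) = 1 := by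
      rw [← Real.rpow_add hε, show (p-1)/p + (1-p)*(1/p) = 0 by field_simp; ring,
        Real.rpow_zero]
    have e5 : ε ^ ((p-1)/p) * x ^ (p-1) * (ε ^ ((1-p)*(1/p)) * y ^ (1:ℝ))
        = (ε ^ ((p-1)/p) * ε ^ ((1-p)*(1/p))) * (x ^ (p-1) * y ^ (1:ℝ)) := by ring
    rw [e1, e2, e5, e4, one_mul, Real.rpow_one]
  rw [h1] at hgm
  have c1 : (p-1)/p ≤ 1 := by rw [div_le_one hp0]; linarith
  have c2 : 1/p ≤ 1 := by rw [div_le_one hp0]; linarith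
  have t1 : (0:ℝ) ≤ ε * x ^ p := by positivity
  have t2 : (0:ℝ) ≤ ε ^ (1-p) * y ^ p := by positivity
  nlinarith [mul_le_mul_of_nonneg_right c1 t1, mul_le_mul_of_nonneg_right c2 t2]

theorem max4_rpow {q w x y z : ℝ} (hq : 0 ≤ q) (hw : 0 ≤ w) (hx : 0 ≤ x)
    (hy : 0 ≤ y) (hz : 0 ≤ z) :
    (max (max w x) (max y z)) ^ q ≤ w ^ q + x ^ q + y ^ q + z ^ q := by
  have Pw := Real.rpow_nonneg hw q
  have Px := Real.rpow_nonneg hx q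
  have Py := Real.rpow_nonneg hy q
  have Pz := Real.rpow_nonneg hz q
  rcases max_choice (max w x) (max y z) with h | h <;> rw [h]
  · rcases max_choice w x with h2 | h2 <;> rw [h2] <;> linarith
  · rcases max_choice y z with h2 | h2 <;> rw [h2] <;> linarith

/-- Pointwise inequality underlying the Brezis–Lieb lemma for the coupled term
`|u|^α |v|^β`, with `α, β > 1`, `α + β = 2* = 2N/(N-2)`: for every `ε > 0` there is
`C > 0` (depending only on `α, β, ε`) such that for all reals `a₁, a₂, b₁, b₂`,
`| |a₁+a₂|^α |b₁+b₂|^β − |a₁|^α |b₁|^β | ≤ Cε(|a₁|^{2*}+|a₂|^{2*}+|b₁|^{2*}+|b₂|^{2*})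
  + Cε^{1−2*}(|a₂|^{2*}+|b₂|^{2*})`. -/
theorem pointwise_brezis_lieb_estimate (N : ℕ) (hN : 3 ≤ N) (α β : ℝ)
    (hα : 1 < α) (hβ : 1 < β) (hαβ : α + β = 2 * N / ((N : ℝ) - 2))
    (ε : ℝ) (hε : 0 < ε) :
    ∃ C : ℝ, 0 < C ∧ ∀ a₁ a₂ b₁ b₂ : ℝ,
      |(|a₁ + a₂| ^ α * |b₁ + b₂| ^ β) - |a₁| ^ α * |b₁| ^ β| ≤
        C * ε * (|a₁| ^ (2 * N / ((N : ℝ) - 2)) + |a₂| ^ (2 * N / ((N : ℝ) - 2))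
            + |b₁| ^ (2 * N / ((N : ℝ) - 2)) + |b₂| ^ (2 * N / ((N : ℝ) - 2)))
          + C * ε ^ (1 - 2 * N / ((N : ℝ) - 2)) *
            (|a₂| ^ (2 * N / ((N : ℝ) - 2)) + |b₂| ^ (2 * N / ((N : ℝ) - 2))) := by
  have hp1 : (1:ℝ) < α + β := by linarith
  have h4P : (0:ℝ) < (4:ℝ) ^ (α + β) := Real.rpow_pos_of_pos (by norm_num) _
  refine ⟨(α + β) * 4 ^ (α + β), by positivity, ?_⟩
  intro a₁ a₂ b₁ b₂
  rw [← hαβ]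
  set P : ℝ := α + β with hP
  set C : ℝ := P * 4 ^ P with hC
  set S : ℝ := |a₁| + |a₂| + |b₁| + |b₂| with hSdef
  have hS : 0 ≤ S := by positivity
  rcases eq_or_lt_of_le hS with h0 | hSpos
  · -- S = 0 : everything is zero
    have h0' : S = 0 := h0.symm
    have ha1 : |a₁| = 0 := by
      have := abs_nonneg a₁; have := abs_nonneg a₂; have := abs_nonneg b₁
      have := abs_nonneg b₂; rw [hSdef] at h0'; linarith
    have ha2 : |a₂| = 0 := by
      have := abs_nonneg a₁; have := abs_nonneg a₂; have := abs_nonneg b₁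
      have := abs_nonneg b₂; rw [hSdef] at h0'; linarith
    have hb1 : |b₁| = 0 := by
      have := abs_nonneg a₁; have := abs_nonneg a₂; have := abs_nonneg b₁
      have := abs_nonneg b₂; rw [hSdef] at h0'; linarith
    have hb2 : |b₂| = 0 := by
      have := abs_nonneg a₁; have := abs_nonneg a₂; have := abs_nonneg b₁
      have := abs_nonneg b₂; rw [hSdef] at h0'; linarith
    rw [abs_eq_zero] at ha1 ha2 hb1 hb2
    subst ha1; subst ha2; subst hb1; subst hb2
    simp [Real.zero_rpow (by linarith : α ≠ 0), Real.zero_rpow (by linarith : β ≠ 0),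
      Real.zero_rpow (by intro h; rw [hP] at h; linarith : P ≠ 0)]
  · -- main case S > 0
    have hA : |a₁ + a₂| ≤ S := by
      have := abs_add_le a₁ a₂
      have := abs_nonneg b₁; have := abs_nonneg b₂
      rw [hSdef]; linarith
    have hB : |b₁ + b₂| ≤ S := by
      have := abs_add_le b₁ b₂
      have := abs_nonneg a₁; have := abs_nonneg a₂
      rw [hSdef]; linarith
    have ha1S : |a₁| ≤ S := by
      have := abs_nonneg a₂; have := abs_nonneg b₁; have := abs_nonneg b₂
      rw [hSdef]; linarith
    have hb1S : |b₁| ≤ S := by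
      have := abs_nonneg a₁; have := abs_nonneg a₂; have := abs_nonneg b₂
      rw [hSdef]; linarith
    have hDa : |(|a₁ + a₂| - |a₁|)| ≤ |a₂| := by
      have := abs_abs_sub_abs_le_abs_sub (a₁ + a₂) a₁
      simpa using this
    have hDb : |(|b₁ + b₂| - |b₁|)| ≤ |b₂| := by
      have := abs_abs_sub_abs_le_abs_sub (b₁ + b₂) b₁
      simpa using this
    have hSa1 : (0:ℝ) ≤ S ^ (α - 1) := Real.rpow_nonneg hS _
    have hSb1 : (0:ℝ) ≤ S ^ (β - 1) := Real.rpow_nonneg hS _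
    have d1 : |(|a₁ + a₂| ^ α - |a₁| ^ α)| ≤ α * S ^ (α - 1) * |a₂| := by
      refine (aux_diff hα.le (abs_nonneg _) (abs_nonneg _) hA ha1S).trans ?_
      have := mul_le_mul_of_nonneg_left hDa
        (by positivity : (0:ℝ) ≤ α * S ^ (α - 1))
      linarith
    have d2 : |(|b₁ + b₂| ^ β - |b₁| ^ β)| ≤ β * S ^ (β - 1) * |b₂| := by
      refine (aux_diff hβ.le (abs_nonneg _) (abs_nonneg _) hB hb1S).trans ?_
      have := mul_le_mul_of_nonneg_left hDb
        (by positivity : (0:ℝ) ≤ β * S ^ (β - 1))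
      linarith
    have hBβ : |b₁ + b₂| ^ β ≤ S ^ β :=
      Real.rpow_le_rpow (abs_nonneg _) hB (by linarith)
    have hAα : |a₁| ^ α ≤ S ^ α :=
      Real.rpow_le_rpow (abs_nonneg _) ha1S (by linarith)
    have hpow1 : S ^ (α - 1) * S ^ β = S ^ (P - 1) := by
      rw [← Real.rpow_add hSpos, hP]; ring_nf
    have hpow2 : S ^ α * S ^ (β - 1) = S ^ (P - 1) := by
      rw [← Real.rpow_add hSpos, hP]; ring_nf
    -- splitting
    have e0 : |(|a₁ + a₂| ^ α * |b₁ + b₂| ^ β) - |a₁| ^ α * |b₁| ^ β| ≤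
        |(|a₁ + a₂| ^ α - |a₁| ^ α)| * |b₁ + b₂| ^ β
          + |a₁| ^ α * |(|b₁ + b₂| ^ β - |b₁| ^ β)| := by
      have hid : (|a₁ + a₂| ^ α * |b₁ + b₂| ^ β) - |a₁| ^ α * |b₁| ^ β
          = (|a₁ + a₂| ^ α - |a₁| ^ α) * |b₁ + b₂| ^ β
            + |a₁| ^ α * (|b₁ + b₂| ^ β - |b₁| ^ β) := by ring
      rw [hid]
      refine (abs_add_le _ _).trans ?_
      rw [abs_mul, abs_mul, abs_of_nonneg (Real.rpow_nonneg (abs_nonneg _) β),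
        abs_of_nonneg (Real.rpow_nonneg (abs_nonneg _) α)]
    have t1 : |(|a₁ + a₂| ^ α - |a₁| ^ α)| * |b₁ + b₂| ^ β
        ≤ α * S ^ (P - 1) * |a₂| := by
      calc |(|a₁ + a₂| ^ α - |a₁| ^ α)| * |b₁ + b₂| ^ β
          ≤ (α * S ^ (α - 1) * |a₂|) * S ^ β := by
            apply mul_le_mul d1 hBβ (Real.rpow_nonneg (abs_nonneg _) β)
            positivity
        _ = α * (S ^ (α - 1) * S ^ β) * |a₂| := by ring
        _ = α * S ^ (P - 1) * |a₂| := by rw [hpow1]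
    have t2 : |a₁| ^ α * |(|b₁ + b₂| ^ β - |b₁| ^ β)|
        ≤ β * S ^ (P - 1) * |b₂| := by
      calc |a₁| ^ α * |(|b₁ + b₂| ^ β - |b₁| ^ β)|
          ≤ S ^ α * (β * S ^ (β - 1) * |b₂|) := by
            apply mul_le_mul hAα d2 (abs_nonneg _) (Real.rpow_nonneg hS α)
        _ = β * (S ^ α * S ^ (β - 1)) * |b₂| := by ring
        _ = β * S ^ (P - 1) * |b₂| := by rw [hpow2]
    -- Young
    have y1 : S ^ (P - 1) * |a₂| ≤ ε * S ^ P + ε ^ (1 - P) * |a₂| ^ P :=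
      aux_young hp1 hS (abs_nonneg _) hε
    have y2 : S ^ (P - 1) * |b₂| ≤ ε * S ^ P + ε ^ (1 - P) * |b₂| ^ P :=
      aux_young hp1 hS (abs_nonneg _) hε
    -- S^P ≤ 4^P * Σ
    set M : ℝ := max (max |a₁| |a₂|) (max |b₁| |b₂|) with hM
    have hMnn : (0:ℝ) ≤ M := le_trans (abs_nonneg a₁)
      (le_trans (le_max_left _ _) (le_max_left _ _))
    have hS4M : S ≤ 4 * M := by
      have m1 : |a₁| ≤ M := le_trans (le_max_left _ _) (le_max_left _ _)
      have m2 : |a₂| ≤ M := le_trans (le_max_right _ _) (le_max_left _ _)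
      have m3 : |b₁| ≤ M := le_trans (le_max_left _ _) (le_max_right _ _)
      have m4 : |b₂| ≤ M := le_trans (le_max_right _ _) (le_max_right _ _)
      rw [hSdef]; linarith
    have s4 : S ^ P ≤ 4 ^ P * (|a₁| ^ P + |a₂| ^ P + |b₁| ^ P + |b₂| ^ P) := by
      calc S ^ P ≤ (4 * M) ^ P :=
            Real.rpow_le_rpow hS hS4M (by linarith)
        _ = 4 ^ P * M ^ P := Real.mul_rpow (by norm_num) hMnn
        _ ≤ 4 ^ P * (|a₁| ^ P + |a₂| ^ P + |b₁| ^ P + |b₂| ^ P) := by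
            apply mul_le_mul_of_nonneg_left _ h4P.le
            exact max4_rpow (by linarith) (abs_nonneg _) (abs_nonneg _)
              (abs_nonneg _) (abs_nonneg _)
    -- assemble
    have hεP : (0:ℝ) < ε ^ (1 - P) := Real.rpow_pos_of_pos hε _
    have p2 : (0:ℝ) ≤ |a₂| ^ P := Real.rpow_nonneg (abs_nonneg _) _
    have p4 : (0:ℝ) ≤ |b₂| ^ P := Real.rpow_nonneg (abs_nonneg _) _
    have h41 : (1:ℝ) ≤ 4 ^ P := Real.one_le_rpow (by norm_num) (by linarith)
    calc |(|a₁ + a₂| ^ α * |b₁ + b₂| ^ β) - |a₁| ^ α * |b₁| ^ β|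
        ≤ α * S ^ (P - 1) * |a₂| + β * S ^ (P - 1) * |b₂| := by linarith
      _ ≤ α * (ε * S ^ P + ε ^ (1 - P) * |a₂| ^ P)
          + β * (ε * S ^ P + ε ^ (1 - P) * |b₂| ^ P) := by
          have k1 := mul_le_mul_of_nonneg_left y1 (by linarith : (0:ℝ) ≤ α)
          have k2 := mul_le_mul_of_nonneg_left y2 (by linarith : (0:ℝ) ≤ β)
          rw [mul_assoc α, mul_assoc β]
          exact add_le_add k1 k2
      _ = P * ε * S ^ P + α * (ε ^ (1 - P) * |a₂| ^ P)
          + β * (ε ^ (1 - P) * |b₂| ^ P) := by rw [hP]; ring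
      _ ≤ P * ε * (4 ^ P * (|a₁| ^ P + |a₂| ^ P + |b₁| ^ P + |b₂| ^ P))
          + P * (ε ^ (1 - P) * |a₂| ^ P) + P * (ε ^ (1 - P) * |b₂| ^ P) := by
          have h1 := mul_le_mul_of_nonneg_left s4
            (by positivity : (0:ℝ) ≤ P * ε)
          have h2 : α * (ε ^ (1 - P) * |a₂| ^ P) ≤ P * (ε ^ (1 - P) * |a₂| ^ P) := by
            apply mul_le_mul_of_nonneg_right _ (by positivity)
            rw [hP]; linarith
          have h3 : β * (ε ^ (1 - P) * |b₂| ^ P) ≤ P * (ε ^ (1 - P) * |b₂| ^ P) := by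
            apply mul_le_mul_of_nonneg_right _ (by positivity)
            rw [hP]; linarith
          linarith
      _ ≤ C * ε * (|a₁| ^ P + |a₂| ^ P + |b₁| ^ P + |b₂| ^ P)
          + C * ε ^ (1 - P) * (|a₂| ^ P + |b₂| ^ P) := by
          rw [hC]
          have hPpos : (0:ℝ) < P := by rw [hP]; linarith
          have q1 : P * (ε ^ (1 - P) * |a₂| ^ P)
              ≤ P * 4 ^ P * (ε ^ (1 - P) * |a₂| ^ P) :=
            mul_le_mul_of_nonneg_right (le_mul_of_one_le_right hPpos.le h41)
              (by positivity)
          have q2 : P * (ε ^ (1 - P) * |b₂| ^ P)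
              ≤ P * 4 ^ P * (ε ^ (1 - P) * |b₂| ^ P) :=
            mul_le_mul_of_nonneg_right (le_mul_of_one_le_right hPpos.le h41)
              (by positivity)
          have q0 : P * ε * (4 ^ P * (|a₁| ^ P + |a₂| ^ P + |b₁| ^ P + |b₂| ^ P))
              = P * 4 ^ P * ε * (|a₁| ^ P + |a₂| ^ P + |b₁| ^ P + |b₂| ^ P) := by
            ring
          have q3 : P * 4 ^ P * (ε ^ (1 - P) * |a₂| ^ P)
              + P * 4 ^ P * (ε ^ (1 - P) * |b₂| ^ P)
              = P * 4 ^ P * ε ^ (1 - P) * (|a₂| ^ P + |b₂| ^ P) := by ring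
          linarith
end
end

section
/- Brezis–Lieb lemma for the coupling term: let Ω ⊆ ℝ^N be open, N ≥ 3, α, β > 1 with α+β = 2* = 2N/(N-2). Suppose (u_n), (v_n) are bounded sequences in L^{2*}(Ω) converging almost everywhere to u and v respectively. Then lim_{n→∞} ∫_Ω (|u_n|^α |v_n|^β − |u_n − u|^α |v_n − v|^β) dx = ∫_Ω |u|^α |v|^β dx. -/
open MeasureTheory Real Filter Topology Set
open scoped ENNReal NNReal

noncomputable section


/-- For `s > 0` and `ε > 0` there is `C ≥ 0` with `(x+y)^s ≤ (1+ε) x^s + C y^s`. -/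
lemma BL_lemA (s : ℝ) (hs : 0 < s) {ε : ℝ} (hε : 0 < ε) :
    ∃ C : ℝ, 0 ≤ C ∧ ∀ x y : ℝ, 0 ≤ x → 0 ≤ y →
      (x + y) ^ s ≤ (1 + ε) * x ^ s + C * y ^ s := by
  set δ : ℝ := (1 + ε) ^ s⁻¹ - 1 with hδdef
  have h1ε : (1 : ℝ) < (1 + ε) ^ s⁻¹ := by
    apply Real.one_lt_rpow_iff_of_pos (by linarith) |>.2
    exact Or.inl ⟨by linarith, by positivity⟩
  have hδ : 0 < δ := by simp [hδdef]; linarith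
  have hδs : (1 + δ) ^ s = 1 + ε := by
    have : (1 : ℝ) + δ = (1 + ε) ^ s⁻¹ := by ring
    rw [this, Real.rpow_inv_rpow (by linarith) hs.ne']
  refine ⟨((1 + δ) / δ) ^ s, by positivity, fun x y hx hy => ?_⟩
  rcases le_total y (δ * x) with h | h
  · have h1 : x + y ≤ (1 + δ) * x := by nlinarith
    calc (x + y) ^ s ≤ ((1 + δ) * x) ^ s :=
          Real.rpow_le_rpow (by linarith) h1 hs.le
      _ = (1 + δ) ^ s * x ^ s := Real.mul_rpow (by linarith) hx
      _ = (1 + ε) * x ^ s := by rw [hδs]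
      _ ≤ (1 + ε) * x ^ s + ((1 + δ) / δ) ^ s * y ^ s := le_add_of_nonneg_right (by positivity)
  · have h1 : x + y ≤ ((1 + δ) / δ) * y := by
      rw [div_mul_eq_mul_div, le_div_iff₀ hδ]; nlinarith
    calc (x + y) ^ s ≤ (((1 + δ) / δ) * y) ^ s :=
          Real.rpow_le_rpow (by linarith) h1 hs.le
      _ = ((1 + δ) / δ) ^ s * y ^ s := Real.mul_rpow (by positivity) hy
      _ ≤ (1 + ε) * x ^ s + ((1 + δ) / δ) ^ s * y ^ s := le_add_of_nonneg_left (by positivity)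

/-- Weighted Young-type inequality: `x^a y^b ≤ ε x^(a+b) + C y^(a+b)`. -/
lemma BL_lemB (a b : ℝ) (ha : 0 < a) (hb : 0 < b) {ε : ℝ} (hε : 0 < ε) :
    ∃ C : ℝ, 0 ≤ C ∧ ∀ x y : ℝ, 0 ≤ x → 0 ≤ y →
      x ^ a * y ^ b ≤ ε * x ^ (a + b) + C * y ^ (a + b) := by
  set δ : ℝ := ε ^ b⁻¹ with hδdef
  have hδ : 0 < δ := by positivity
  have hδb : δ ^ b = ε := Real.rpow_inv_rpow hε.le hb.ne'
  refine ⟨(1 / δ) ^ a, by positivity, fun x y hx hy => ?_⟩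
  rcases le_total y (δ * x) with h | h
  · calc x ^ a * y ^ b ≤ x ^ a * (δ * x) ^ b := by
          exact mul_le_mul_of_nonneg_left (Real.rpow_le_rpow hy h hb.le) (by positivity)
      _ = δ ^ b * (x ^ a * x ^ b) := by rw [Real.mul_rpow hδ.le hx]; ring
      _ = ε * x ^ (a + b) := by rw [hδb, ← Real.rpow_add_of_nonneg hx ha.le hb.le]
      _ ≤ ε * x ^ (a + b) + (1 / δ) ^ a * y ^ (a + b) := le_add_of_nonneg_right (by positivity)
  · have hxy : x ≤ (1 / δ) * y := by rw [one_div, inv_mul_eq_div, le_div_iff₀ hδ]; nlinarith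
    calc x ^ a * y ^ b ≤ ((1 / δ) * y) ^ a * y ^ b := by
          exact mul_le_mul_of_nonneg_right (Real.rpow_le_rpow hx hxy ha.le) (by positivity)
      _ = (1 / δ) ^ a * (y ^ a * y ^ b) := by rw [Real.mul_rpow (by positivity) hy]; ring
      _ = (1 / δ) ^ a * y ^ (a + b) := by rw [← Real.rpow_add_of_nonneg hy ha.le hb.le]
      _ ≤ ε * x ^ (a + b) + (1 / δ) ^ a * y ^ (a + b) := le_add_of_nonneg_left (by positivity)

/-- Plain Young-type: `x^a y^b ≤ x^(a+b) + y^(a+b)`. -/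
lemma BL_cross (a b : ℝ) (ha : 0 < a) (hb : 0 < b) (x y : ℝ) (hx : 0 ≤ x) (hy : 0 ≤ y) :
    x ^ a * y ^ b ≤ x ^ (a + b) + y ^ (a + b) := by
  rcases le_total x y with h | h
  · calc x ^ a * y ^ b ≤ y ^ a * y ^ b :=
        mul_le_mul_of_nonneg_right (Real.rpow_le_rpow hx h ha.le) (by positivity)
      _ = y ^ (a + b) := (Real.rpow_add_of_nonneg hy ha.le hb.le).symm
      _ ≤ x ^ (a + b) + y ^ (a + b) := le_add_of_nonneg_left (by positivity)
  · calc x ^ a * y ^ b ≤ x ^ a * x ^ b :=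
        mul_le_mul_of_nonneg_left (Real.rpow_le_rpow hy h hb.le) (by positivity)
      _ = x ^ (a + b) := (Real.rpow_add_of_nonneg hx ha.le hb.le).symm
      _ ≤ x ^ (a + b) + y ^ (a + b) := le_add_of_nonneg_right (by positivity)

set_option maxHeartbeats 1000000 in
/-- Expansion lemma: `(a+b)^α (c+d)^β ≤ a^α c^β + ε(a^p + c^p) + C(b^p + d^p)`. -/
lemma BL_lemC' (α β : ℝ) (hα : 0 < α) (hβ : 0 < β) {ε : ℝ} (hε : 0 < ε) :
    ∃ C : ℝ, 0 ≤ C ∧ ∀ a b c d : ℝ, 0 ≤ a → 0 ≤ b → 0 ≤ c → 0 ≤ d →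
      (a + b) ^ α * (c + d) ^ β ≤ a ^ α * c ^ β
        + ε * (a ^ (α + β) + c ^ (α + β)) + C * (b ^ (α + β) + d ^ (α + β)) := by
  set ε₁ : ℝ := min 1 (ε / 9) with hε₁def
  have hε₁ : 0 < ε₁ := lt_min one_pos (by positivity)
  have hε₁le : ε₁ ≤ ε / 9 := min_le_right _ _
  have hε₁1 : ε₁ ≤ 1 := min_le_left _ _
  obtain ⟨C₁, hC₁0, hC₁⟩ := BL_lemA α hα hε₁
  obtain ⟨C₂, hC₂0, hC₂⟩ := BL_lemA β hβ hε₁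
  -- small parameter for the cross terms
  have hden : (0:ℝ) < 3 * ((1 + ε₁) * (C₁ + C₂) + 1) := by positivity
  set ε₂ : ℝ := ε / (3 * ((1 + ε₁) * (C₁ + C₂) + 1)) with hε₂def
  have hε₂ : 0 < ε₂ := by positivity
  obtain ⟨C₃, hC₃0, hC₃⟩ := BL_lemB α β hα hβ hε₂
  obtain ⟨C₄, hC₄0, hC₄⟩ := BL_lemB β α hβ hα hε₂
  refine ⟨(1 + ε₁) * (C₁ + C₂) * (C₃ + C₄) + C₁ * C₂ + (1 + ε₁) * (C₁ + C₂), ?_, ?_⟩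
  · positivity
  intro a b c d ha hb hc hd
  set p : ℝ := α + β with hpdef
  have key1 : (a + b) ^ α ≤ (1 + ε₁) * a ^ α + C₁ * b ^ α := hC₁ a b ha hb
  have key2 : (c + d) ^ β ≤ (1 + ε₁) * c ^ β + C₂ * d ^ β := hC₂ c d hc hd
  have h1 : (a + b) ^ α * (c + d) ^ β ≤
      ((1 + ε₁) * a ^ α + C₁ * b ^ α) * ((1 + ε₁) * c ^ β + C₂ * d ^ β) := by
    apply mul_le_mul key1 key2 (by positivity) (by positivity)
  have expand : ((1 + ε₁) * a ^ α + C₁ * b ^ α) * ((1 + ε₁) * c ^ β + C₂ * d ^ β)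
      = (1 + ε₁)^2 * (a ^ α * c ^ β) + (1 + ε₁) * C₂ * (a ^ α * d ^ β)
        + (1 + ε₁) * C₁ * (b ^ α * c ^ β) + C₁ * C₂ * (b ^ α * d ^ β) := by ring
  -- bound each term
  have t0 : a ^ α * c ^ β ≤ a ^ p + c ^ p := BL_cross α β hα hβ a c ha hc
  have t1 : a ^ α * d ^ β ≤ ε₂ * a ^ p + C₃ * d ^ p := hC₃ a d ha hd
  have t2 : b ^ α * c ^ β ≤ ε₂ * c ^ p + C₄ * b ^ p := by
    have := hC₄ c b hc hb
    calc b ^ α * c ^ β = c ^ β * b ^ α := by ring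
      _ ≤ ε₂ * c ^ (β + α) + C₄ * b ^ (β + α) := this
      _ = ε₂ * c ^ p + C₄ * b ^ p := by rw [add_comm β α]
  have t3 : b ^ α * d ^ β ≤ b ^ p + d ^ p := BL_cross α β hα hβ b d hb hd
  -- smallness facts
  have hsq : (1 + ε₁)^2 ≤ 1 + 3 * ε₁ := by nlinarith
  have hA2 : (1 + ε₁) * C₂ * ε₂ ≤ ε / 3 := by
    have h : (1 + ε₁) * C₂ * ε₂ = ((1 + ε₁) * C₂ * ε) / (3 * ((1 + ε₁) * (C₁ + C₂) + 1)) := by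
      rw [hε₂def]; ring
    rw [h, div_le_div_iff₀ hden (by norm_num : (0:ℝ) < 3)]
    nlinarith [mul_nonneg (mul_nonneg (by positivity : (0:ℝ) ≤ 1 + ε₁) hC₁0) hε.le, hε.le]
  have hA1 : (1 + ε₁) * C₁ * ε₂ ≤ ε / 3 := by
    have h : (1 + ε₁) * C₁ * ε₂ = ((1 + ε₁) * C₁ * ε) / (3 * ((1 + ε₁) * (C₁ + C₂) + 1)) := by
      rw [hε₂def]; ring
    rw [h, div_le_div_iff₀ hden (by norm_num : (0:ℝ) < 3)]
    nlinarith [mul_nonneg (mul_nonneg (by positivity : (0:ℝ) ≤ 1 + ε₁) hC₂0) hε.le, hε.le]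
  have h3ε₁ : 3 * ε₁ ≤ ε / 3 := by linarith
  have hpnn : ∀ t : ℝ, 0 ≤ t → 0 ≤ t ^ p := fun t ht => Real.rpow_nonneg ht p
  have hap := hpnn a ha
  have hbp := hpnn b hb
  have hcp := hpnn c hc
  have hdp := hpnn d hd
  have hacnn : 0 ≤ a ^ α * c ^ β := by positivity
  have e1 : (1 + ε₁)^2 * (a ^ α * c ^ β) ≤ a ^ α * c ^ β + (ε / 3) * (a ^ p + c ^ p) := by
    nlinarith [mul_le_mul_of_nonneg_left t0 (by positivity : (0:ℝ) ≤ 3 * ε₁),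
      mul_le_mul_of_nonneg_right h3ε₁ (by linarith : (0:ℝ) ≤ a ^ p + c ^ p)]
  have e2 : (1 + ε₁) * C₂ * (a ^ α * d ^ β)
      ≤ (1 + ε₁) * C₂ * ε₂ * a ^ p + (1 + ε₁) * C₂ * C₃ * d ^ p :=
    le_trans (mul_le_mul_of_nonneg_left t1 (by positivity)) (le_of_eq (by ring))
  have e3 : (1 + ε₁) * C₁ * (b ^ α * c ^ β)
      ≤ (1 + ε₁) * C₁ * ε₂ * c ^ p + (1 + ε₁) * C₁ * C₄ * b ^ p :=
    le_trans (mul_le_mul_of_nonneg_left t2 (by positivity)) (le_of_eq (by ring))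
  have e4 : C₁ * C₂ * (b ^ α * d ^ β) ≤ C₁ * C₂ * b ^ p + C₁ * C₂ * d ^ p :=
    le_trans (mul_le_mul_of_nonneg_left t3 (by positivity)) (le_of_eq (by ring))
  have f2 : (1 + ε₁) * C₂ * ε₂ * a ^ p ≤ (ε / 3) * a ^ p :=
    mul_le_mul_of_nonneg_right hA2 hap
  have f3 : (1 + ε₁) * C₁ * ε₂ * c ^ p ≤ (ε / 3) * c ^ p :=
    mul_le_mul_of_nonneg_right hA1 hcp
  have hone : (0:ℝ) ≤ 1 + ε₁ := by positivity
  have g1 : (1 + ε₁) * C₂ * C₃ ≤ (1 + ε₁) * (C₁ + C₂) * (C₃ + C₄) := by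
    nlinarith [mul_nonneg (mul_nonneg hone hC₁0) hC₃0, mul_nonneg (mul_nonneg hone hC₁0) hC₄0,
      mul_nonneg (mul_nonneg hone hC₂0) hC₄0]
  have g2 : (1 + ε₁) * C₁ * C₄ ≤ (1 + ε₁) * (C₁ + C₂) * (C₃ + C₄) := by
    nlinarith [mul_nonneg (mul_nonneg hone hC₁0) hC₃0, mul_nonneg (mul_nonneg hone hC₂0) hC₃0,
      mul_nonneg (mul_nonneg hone hC₂0) hC₄0]
  have g1' : (1 + ε₁) * C₂ * C₃ * d ^ p ≤ (1 + ε₁) * (C₁ + C₂) * (C₃ + C₄) * d ^ p :=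
    mul_le_mul_of_nonneg_right g1 hdp
  have g2' : (1 + ε₁) * C₁ * C₄ * b ^ p ≤ (1 + ε₁) * (C₁ + C₂) * (C₃ + C₄) * b ^ p :=
    mul_le_mul_of_nonneg_right g2 hbp
  have hcoef : 0 ≤ (1 + ε₁) * (C₁ + C₂) := by positivity
  have hcb : 0 ≤ (1 + ε₁) * (C₁ + C₂) * b ^ p := by positivity
  have hcd : 0 ≤ (1 + ε₁) * (C₁ + C₂) * d ^ p := by positivity
  have hεap : 0 ≤ ε * a ^ p := mul_nonneg hε.le hap
  have hεcp : 0 ≤ ε * c ^ p := mul_nonneg hε.le hcp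
  rw [expand] at h1
  linarith [h1, e1, e2, e3, e4, f2, f3, g1', g2', hcb, hcd, hεap, hεcp]

set_option maxHeartbeats 1000000 in
/-- The key pointwise Brezis–Lieb estimate for the coupling term. -/
lemma BL_lemC (α β : ℝ) (hα : 0 < α) (hβ : 0 < β) {ε : ℝ} (hε : 0 < ε) :
    ∃ C : ℝ, 0 ≤ C ∧ ∀ w u z v : ℝ,
      |(|w + u| ^ α * |z + v| ^ β - |w| ^ α * |z| ^ β)|
        ≤ ε * (|w| ^ (α + β) + |z| ^ (α + β)) + C * (|u| ^ (α + β) + |v| ^ (α + β)) := by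
  set p : ℝ := α + β with hp
  have hppos : 0 < p := by positivity
  obtain ⟨K, hK0, hK⟩ := BL_lemA p hppos one_pos
  obtain ⟨C₁, hC₁0, hC₁⟩ := BL_lemC' α β hα hβ hε
  obtain ⟨C₂, hC₂0, hC₂⟩ := BL_lemC' α β hα hβ (half_pos hε)
  refine ⟨C₁ + (ε / 2) * K + C₂, by positivity, fun w u z v => ?_⟩
  have h1 : |w + u| ≤ |w| + |u| := abs_add_le w u
  have h2 : |z + v| ≤ |z| + |v| := abs_add_le z v
  have h3 : |w| ≤ |w + u| + |u| := by
    calc |w| = |(w + u) + (-u)| := by ring_nf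
      _ ≤ |w + u| + |(-u)| := abs_add_le _ _
      _ = |w + u| + |u| := by rw [abs_neg]
  have h4 : |z| ≤ |z + v| + |v| := by
    calc |z| = |(z + v) + (-v)| := by ring_nf
      _ ≤ |z + v| + |(-v)| := abs_add_le _ _
      _ = |z + v| + |v| := by rw [abs_neg]
  rw [abs_sub_le_iff]
  constructor
  · -- upper bound
    have hm : |w + u| ^ α * |z + v| ^ β ≤ (|w| + |u|) ^ α * (|z| + |v|) ^ β := by
      apply mul_le_mul (Real.rpow_le_rpow (abs_nonneg _) h1 hα.le)
        (Real.rpow_le_rpow (abs_nonneg _) h2 hβ.le) (by positivity) (by positivity)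
    have := hC₁ |w| |u| |z| |v| (abs_nonneg _) (abs_nonneg _) (abs_nonneg _) (abs_nonneg _)
    have hrest : 0 ≤ ((ε / 2) * K + C₂) * (|u| ^ p + |v| ^ p) := by positivity
    nlinarith [hm, this]
  · -- lower bound
    have hm : |w| ^ α * |z| ^ β ≤ (|w + u| + |u|) ^ α * (|z + v| + |v|) ^ β := by
      apply mul_le_mul (Real.rpow_le_rpow (abs_nonneg _) h3 hα.le)
        (Real.rpow_le_rpow (abs_nonneg _) h4 hβ.le) (by positivity) (by positivity)
    have hexp := hC₂ |w + u| |u| |z + v| |v| (abs_nonneg _) (abs_nonneg _) (abs_nonneg _)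
      (abs_nonneg _)
    have hwu : |w + u| ^ p ≤ 2 * |w| ^ p + K * |u| ^ p := by
      calc |w + u| ^ p ≤ (|w| + |u|) ^ p := Real.rpow_le_rpow (abs_nonneg _) h1 hppos.le
        _ ≤ (1 + 1) * |w| ^ p + K * |u| ^ p := hK |w| |u| (abs_nonneg _) (abs_nonneg _)
        _ = 2 * |w| ^ p + K * |u| ^ p := by ring
    have hzv : |z + v| ^ p ≤ 2 * |z| ^ p + K * |v| ^ p := by
      calc |z + v| ^ p ≤ (|z| + |v|) ^ p := Real.rpow_le_rpow (abs_nonneg _) h2 hppos.le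
        _ ≤ (1 + 1) * |z| ^ p + K * |v| ^ p := hK |z| |v| (abs_nonneg _) (abs_nonneg _)
        _ = 2 * |z| ^ p + K * |v| ^ p := by ring
    have hC₁rest : 0 ≤ C₁ * (|u| ^ p + |v| ^ p) := by positivity
    have e1 : (ε / 2) * (|w + u| ^ p + |z + v| ^ p)
        ≤ (ε / 2) * (2 * |w| ^ p + K * |u| ^ p + (2 * |z| ^ p + K * |v| ^ p)) := by
      apply mul_le_mul_of_nonneg_left (by linarith) (by positivity)
    nlinarith [hm, hexp, e1, hC₁rest]

open MeasureTheory in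
lemma BL_aesm_rpow {X : Type*} [MeasurableSpace X] {μ : Measure X} {f : X → ℝ}
    (hf : AEStronglyMeasurable f μ) {s : ℝ} (hs : 0 ≤ s) :
    AEStronglyMeasurable (fun x => |f x| ^ s) μ :=
  (continuous_abs.rpow_const (fun _ => Or.inr hs)).comp_aestronglyMeasurable hf

open MeasureTheory in
/-- Bound on the `p`-th power integral from an `eLpNorm` bound. -/
lemma BL_integral_rpow_le {X : Type*} [MeasurableSpace X] {μ : Measure X} {f : X → ℝ}
    (hf : AEStronglyMeasurable f μ) {p : ℝ} (hp : 0 < p) {C : ℝ≥0∞} (hC : C ≠ ⊤)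
    (h : eLpNorm f (ENNReal.ofReal p) μ ≤ C) :
    ∫ x, |f x| ^ p ∂μ ≤ (C ^ p).toReal := by
  have hq0 : ENNReal.ofReal p ≠ 0 := by
    simp [ENNReal.ofReal_eq_zero]; linarith
  have hqtop : ENNReal.ofReal p ≠ ⊤ := ENNReal.ofReal_ne_top
  have htr : (ENNReal.ofReal p).toReal = p := ENNReal.toReal_ofReal hp.le
  have h1 : ∫ x, |f x| ^ p ∂μ = (∫⁻ x, ENNReal.ofReal (|f x| ^ p) ∂μ).toReal := by
    apply integral_eq_lintegral_of_nonneg_ae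
    · filter_upwards with x using by positivity
    · exact BL_aesm_rpow hf hp.le
  have h2 : ∀ x, ENNReal.ofReal (|f x| ^ p) = (‖f x‖₊ : ℝ≥0∞) ^ p := by
    intro x
    rw [← ENNReal.ofReal_rpow_of_nonneg (abs_nonneg _) hp.le, ← Real.norm_eq_abs,
      ofReal_norm_eq_enorm]; rfl
  have h3 : ∫⁻ x, ENNReal.ofReal (|f x| ^ p) ∂μ = ∫⁻ x, (‖f x‖₊ : ℝ≥0∞) ^ p ∂μ := by
    simp_rw [h2]
  have h4 : eLpNorm f (ENNReal.ofReal p) μ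
      = (∫⁻ x, (‖f x‖₊ : ℝ≥0∞) ^ p ∂μ) ^ (1 / p) := by
    rw [eLpNorm_eq_lintegral_rpow_enorm_toReal hq0 hqtop, htr]; rfl
  have h5 : ∫⁻ x, (‖f x‖₊ : ℝ≥0∞) ^ p ∂μ ≤ C ^ p := by
    have := ENNReal.rpow_le_rpow h (le_of_lt hp) -- raise h4 ≤ C to power p
    rw [h4] at this
    rwa [← ENNReal.rpow_mul, one_div, inv_mul_cancel₀ hp.ne', ENNReal.rpow_one] at this
  rw [h1, h3]
  exact ENNReal.toReal_mono (ENNReal.rpow_ne_top_of_nonneg hp.le hC) h5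

set_option maxHeartbeats 2000000 in
/-- **Brezis–Lieb lemma for the coupling term**: if `Ω ⊆ ℝ^N` is open, `α, β > 1` with
`α + β = 2* = 2N/(N-2)`, and `(u_n), (v_n)` are bounded in `L^{2*}(Ω)` with
`u_n → u`, `v_n → v` a.e. on `Ω`, then
`∫_Ω (|u_n|^α |v_n|^β − |u_n−u|^α |v_n−v|^β) → ∫_Ω |u|^α |v|^β`. -/
theorem brezis_lieb_coupling (N : ℕ) (hN : 3 ≤ N) (α β : ℝ)
    (hα : 1 < α) (hβ : 1 < β) (hαβ : α + β = 2 * N / ((N : ℝ) - 2))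
    (Ω : Set (EuclideanSpace ℝ (Fin N))) (hΩ : IsOpen Ω)
    (u v : ℕ → EuclideanSpace ℝ (Fin N) → ℝ)
    (u₀ v₀ : EuclideanSpace ℝ (Fin N) → ℝ)
    (hu : ∀ n, MemLp (u n) (ENNReal.ofReal (2 * N / ((N : ℝ) - 2))) (volume.restrict Ω))
    (hv : ∀ n, MemLp (v n) (ENNReal.ofReal (2 * N / ((N : ℝ) - 2))) (volume.restrict Ω))
    (hbound : ∃ C : ℝ≥0∞, C < ⊤ ∧ ∀ n,
      eLpNorm (u n) (ENNReal.ofReal (2 * N / ((N : ℝ) - 2))) (volume.restrict Ω) ≤ C ∧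
      eLpNorm (v n) (ENNReal.ofReal (2 * N / ((N : ℝ) - 2))) (volume.restrict Ω) ≤ C)
    (huae : ∀ᵐ x ∂(volume.restrict Ω), Tendsto (fun n => u n x) atTop (nhds (u₀ x)))
    (hvae : ∀ᵐ x ∂(volume.restrict Ω), Tendsto (fun n => v n x) atTop (nhds (v₀ x))) :
    Tendsto (fun n => ∫ x in Ω,
        (|u n x| ^ α * |v n x| ^ β - |u n x - u₀ x| ^ α * |v n x - v₀ x| ^ β))
      atTop (nhds (∫ x in Ω, |u₀ x| ^ α * |v₀ x| ^ β)) := by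
  obtain ⟨C, hCtop, hCb⟩ := hbound
  set μ : Measure (EuclideanSpace ℝ (Fin N)) := volume.restrict Ω with hμdef
  set q : ℝ≥0∞ := ENNReal.ofReal (2 * N / ((N : ℝ) - 2)) with hqdef
  have hα0 : (0:ℝ) < α := by linarith
  have hβ0 : (0:ℝ) < β := by linarith
  have hp0 : (0:ℝ) < α + β := by linarith
  have hq : q = ENNReal.ofReal (α + β) := by rw [hqdef, hαβ]
  have hq0 : q ≠ 0 := by
    rw [hq]; simp only [ne_eq, ENNReal.ofReal_eq_zero, not_le]; linarith
  have hqtop : q ≠ ⊤ := by rw [hq]; exact ENNReal.ofReal_ne_top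
  have hq1 : (1:ℝ≥0∞) ≤ q := by rw [hq]; exact ENNReal.one_le_ofReal.mpr (by linarith)
  have htr : q.toReal = α + β := by rw [hq]; exact ENNReal.toReal_ofReal hp0.le
  have hum : ∀ n, AEStronglyMeasurable (u n) μ := fun n => (hu n).1
  have hvm : ∀ n, AEStronglyMeasurable (v n) μ := fun n => (hv n).1
  have hu₀m : AEStronglyMeasurable u₀ μ := aestronglyMeasurable_of_tendsto_ae atTop hum huae
  have hv₀m : AEStronglyMeasurable v₀ μ := aestronglyMeasurable_of_tendsto_ae atTop hvm hvae
  have hCu₀ : eLpNorm u₀ q μ ≤ C :=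
    le_trans (MeasureTheory.Lp.eLpNorm_lim_le_liminf_eLpNorm hum u₀ huae)
      (liminf_le_of_frequently_le' (Filter.Frequently.of_forall fun n => (hCb n).1))
  have hCv₀ : eLpNorm v₀ q μ ≤ C :=
    le_trans (MeasureTheory.Lp.eLpNorm_lim_le_liminf_eLpNorm hvm v₀ hvae)
      (liminf_le_of_frequently_le' (Filter.Frequently.of_forall fun n => (hCb n).2))
  have hu₀L : MemLp u₀ q μ := ⟨hu₀m, lt_of_le_of_lt hCu₀ hCtop⟩
  have hv₀L : MemLp v₀ q μ := ⟨hv₀m, lt_of_le_of_lt hCv₀ hCtop⟩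
  have intp : ∀ {f : EuclideanSpace ℝ (Fin N) → ℝ}, MemLp f q μ →
      Integrable (fun x => |f x| ^ (α + β)) μ := fun {f} hf => by
    have h := hf.integrable_norm_rpow hq0 hqtop
    simpa only [Real.norm_eq_abs, htr] using h
  have hwm : ∀ n, AEStronglyMeasurable (fun x => u n x - u₀ x) μ := fun n => (hum n).sub hu₀m
  have hzm : ∀ n, AEStronglyMeasurable (fun x => v n x - v₀ x) μ := fun n => (hvm n).sub hv₀m
  have hwL : ∀ n, MemLp (fun x => u n x - u₀ x) q μ := fun n => (hu n).sub hu₀L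
  have hzL : ∀ n, MemLp (fun x => v n x - v₀ x) q μ := fun n => (hv n).sub hv₀L
  have hCC : C + C ≠ ⊤ := ENNReal.add_ne_top.2 ⟨hCtop.ne, hCtop.ne⟩
  have hWb : ∀ n, eLpNorm (fun x => u n x - u₀ x) q μ ≤ C + C := fun n =>
    le_trans (eLpNorm_sub_le (hum n) hu₀m hq1) (add_le_add (hCb n).1 hCu₀)
  have hZb : ∀ n, eLpNorm (fun x => v n x - v₀ x) q μ ≤ C + C := fun n =>
    le_trans (eLpNorm_sub_le (hvm n) hv₀m hq1) (add_le_add (hCb n).2 hCv₀)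
  set M₁ : ℝ := ((C + C) ^ (α + β)).toReal with hM₁def
  have hM₁0 : 0 ≤ M₁ := ENNReal.toReal_nonneg
  have hWint : ∀ n, ∫ x, |u n x - u₀ x| ^ (α + β) ∂μ ≤ M₁ := fun n =>
    BL_integral_rpow_le (hwm n) hp0 hCC (by rw [← hq]; exact hWb n)
  have hZint : ∀ n, ∫ x, |v n x - v₀ x| ^ (α + β) ∂μ ≤ M₁ := fun n =>
    BL_integral_rpow_le (hzm n) hp0 hCC (by rw [← hq]; exact hZb n)
  have hWp : ∀ n, Integrable (fun x => |u n x - u₀ x| ^ (α + β)) μ := fun n => intp (hwL n)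
  have hZp : ∀ n, Integrable (fun x => |v n x - v₀ x| ^ (α + β)) μ := fun n => intp (hzL n)
  have hu₀p : Integrable (fun x => |u₀ x| ^ (α + β)) μ := intp hu₀L
  have hv₀p : Integrable (fun x => |v₀ x| ^ (α + β)) μ := intp hv₀L
  have hunp : ∀ n, Integrable (fun x => |u n x| ^ (α + β)) μ := fun n => intp (hu n)
  have hvnp : ∀ n, Integrable (fun x => |v n x| ^ (α + β)) μ := fun n => intp (hv n)
  have mn : ∀ n, AEStronglyMeasurable (fun x => |u n x| ^ α * |v n x| ^ β) μ := fun n =>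
    (BL_aesm_rpow (hum n) hα0.le).mul (BL_aesm_rpow (hvm n) hβ0.le)
  have mw : ∀ n, AEStronglyMeasurable
      (fun x => |u n x - u₀ x| ^ α * |v n x - v₀ x| ^ β) μ := fun n =>
    (BL_aesm_rpow (hwm n) hα0.le).mul (BL_aesm_rpow (hzm n) hβ0.le)
  have m0 : AEStronglyMeasurable (fun x => |u₀ x| ^ α * |v₀ x| ^ β) μ :=
    (BL_aesm_rpow hu₀m hα0.le).mul (BL_aesm_rpow hv₀m hβ0.le)
  have prod_int : ∀ {f g : EuclideanSpace ℝ (Fin N) → ℝ},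
      AEStronglyMeasurable f μ → AEStronglyMeasurable g μ →
      Integrable (fun x => |f x| ^ (α + β)) μ → Integrable (fun x => |g x| ^ (α + β)) μ →
      Integrable (fun x => |f x| ^ α * |g x| ^ β) μ := fun {f g} hf hg hfp hgp => by
    refine (hfp.add hgp).mono' ((BL_aesm_rpow hf hα0.le).mul (BL_aesm_rpow hg hβ0.le)) ?_
    filter_upwards with x
    rw [Real.norm_eq_abs, abs_of_nonneg (by positivity)]
    exact BL_cross α β hα0 hβ0 _ _ (abs_nonneg _) (abs_nonneg _)
  have hPn : ∀ n, Integrable (fun x => |u n x| ^ α * |v n x| ^ β) μ := fun n =>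
    prod_int (hum n) (hvm n) (hunp n) (hvnp n)
  have hPw : ∀ n, Integrable (fun x => |u n x - u₀ x| ^ α * |v n x - v₀ x| ^ β) μ := fun n =>
    prod_int (hwm n) (hzm n) (hWp n) (hZp n)
  have hP0 : Integrable (fun x => |u₀ x| ^ α * |v₀ x| ^ β) μ :=
    prod_int hu₀m hv₀m hu₀p hv₀p
  set F : ℕ → EuclideanSpace ℝ (Fin N) → ℝ := fun n x =>
    |(|u n x| ^ α * |v n x| ^ β - |u n x - u₀ x| ^ α * |v n x - v₀ x| ^ β)
      - |u₀ x| ^ α * |v₀ x| ^ β| with hFdef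
  have hF0 : ∀ n x, 0 ≤ F n x := fun n x => abs_nonneg _
  have hFm : ∀ n, AEStronglyMeasurable (F n) μ := fun n =>
    continuous_abs.comp_aestronglyMeasurable (((mn n).sub (mw n)).sub m0)
  -- key pointwise estimate
  have key : ∀ (ε' C' : ℝ),
      (∀ w u z v : ℝ, |(|w + u| ^ α * |z + v| ^ β - |w| ^ α * |z| ^ β)|
        ≤ ε' * (|w| ^ (α + β) + |z| ^ (α + β)) + C' * (|u| ^ (α + β) + |v| ^ (α + β))) →
      ∀ n x, F n x ≤ ε' * (|u n x - u₀ x| ^ (α + β) + |v n x - v₀ x| ^ (α + β))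
        + C' * (|u₀ x| ^ (α + β) + |v₀ x| ^ (α + β))
        + (|u₀ x| ^ (α + β) + |v₀ x| ^ (α + β)) := by
    intro ε' C' h n x
    have e1 : (u n x - u₀ x) + u₀ x = u n x := by ring
    have e2 : (v n x - v₀ x) + v₀ x = v n x := by ring
    have h1 := h (u n x - u₀ x) (u₀ x) (v n x - v₀ x) (v₀ x)
    rw [e1, e2] at h1
    have h2 : |u₀ x| ^ α * |v₀ x| ^ β ≤ |u₀ x| ^ (α + β) + |v₀ x| ^ (α + β) :=
      BL_cross α β hα0 hβ0 _ _ (abs_nonneg _) (abs_nonneg _)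
    have h3 : F n x ≤ |(|u n x| ^ α * |v n x| ^ β
          - |u n x - u₀ x| ^ α * |v n x - v₀ x| ^ β)| + |u₀ x| ^ α * |v₀ x| ^ β := by
      have := abs_sub (|u n x| ^ α * |v n x| ^ β
          - |u n x - u₀ x| ^ α * |v n x - v₀ x| ^ β) (|u₀ x| ^ α * |v₀ x| ^ β)
      have habs : |(|u₀ x| ^ α * |v₀ x| ^ β)| = |u₀ x| ^ α * |v₀ x| ^ β :=
        abs_of_nonneg (by positivity)
      simp only [hFdef]
      linarith
    linarith
  -- integrability of F
  have hFint : ∀ n, Integrable (F n) μ := by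
    intro n
    obtain ⟨C₁, hC₁0, hC₁⟩ := BL_lemC α β hα0 hβ0 one_pos
    refine Integrable.mono' (((hWp n).add (hZp n)).add
      ((hu₀p.add hv₀p).const_mul (C₁ + 1))) (hFm n) ?_
    filter_upwards with x
    rw [Real.norm_eq_abs, abs_of_nonneg (hF0 n x)]
    have := key 1 C₁ hC₁ n x
    simp only [Pi.add_apply]
    linarith
  -- a.e. convergence of F to 0
  have hFae : ∀ᵐ x ∂μ, Tendsto (fun n => F n x) atTop (𝓝 0) := by
    filter_upwards [huae, hvae] with x hxu hxv
    have cα : Continuous fun t : ℝ => |t| ^ α :=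
      continuous_abs.rpow_const fun _ => Or.inr hα0.le
    have cβ : Continuous fun t : ℝ => |t| ^ β :=
      continuous_abs.rpow_const fun _ => Or.inr hβ0.le
    have h1 : Tendsto (fun n => |u n x| ^ α) atTop (𝓝 (|u₀ x| ^ α)) :=
      (cα.tendsto _).comp hxu
    have h2 : Tendsto (fun n => |v n x| ^ β) atTop (𝓝 (|v₀ x| ^ β)) :=
      (cβ.tendsto _).comp hxv
    have h3 : Tendsto (fun n => u n x - u₀ x) atTop (𝓝 0) := by
      simpa using hxu.sub (tendsto_const_nhds (x := u₀ x))
    have h4 : Tendsto (fun n => v n x - v₀ x) atTop (𝓝 0) := by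
      simpa using hxv.sub (tendsto_const_nhds (x := v₀ x))
    have h5 : Tendsto (fun n => |u n x - u₀ x| ^ α) atTop (𝓝 0) := by
      have := (cα.tendsto 0).comp h3
      simpa [abs_zero, Real.zero_rpow hα0.ne', Function.comp_def] using this
    have h6 : Tendsto (fun n => |v n x - v₀ x| ^ β) atTop (𝓝 0) := by
      have := (cβ.tendsto 0).comp h4
      simpa [abs_zero, Real.zero_rpow hβ0.ne', Function.comp_def] using this
    have h7 : Tendsto (fun n => (|u n x| ^ α * |v n x| ^ β
        - |u n x - u₀ x| ^ α * |v n x - v₀ x| ^ β) - |u₀ x| ^ α * |v₀ x| ^ β)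
        atTop (𝓝 0) := by
      have := ((h1.mul h2).sub (h5.mul h6)).sub
        (tendsto_const_nhds (x := |u₀ x| ^ α * |v₀ x| ^ β))
      simpa using this
    have := (continuous_abs.tendsto 0).comp h7
    simpa [abs_zero, hFdef, Function.comp_def] using this
  -- convergence of the integrals of F to 0
  have hFto : Tendsto (fun n => ∫ x, F n x ∂μ) atTop (𝓝 0) := by
    refine tendsto_order.2 ⟨fun a ha => ?_, fun a ha => ?_⟩
    · filter_upwards with n
      exact lt_of_lt_of_le ha (integral_nonneg fun x => hF0 n x)
    · set ε : ℝ := a / (2 * (2 * M₁ + 1)) with hεdef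
      have hε : 0 < ε := by positivity
      obtain ⟨C₂, hC₂0, hC₂⟩ := BL_lemC α β hα0 hβ0 hε
      set G : EuclideanSpace ℝ (Fin N) → ℝ :=
        fun x => (C₂ + 1) * (|u₀ x| ^ (α + β) + |v₀ x| ^ (α + β)) with hGdef
      have hGint : Integrable G μ := (hu₀p.add hv₀p).const_mul _
      set g : ℕ → EuclideanSpace ℝ (Fin N) → ℝ := fun n x =>
        max (F n x - ε * (|u n x - u₀ x| ^ (α + β) + |v n x - v₀ x| ^ (α + β))) 0 with hgdef
      have hgm : ∀ n, AEStronglyMeasurable (g n) μ := fun n =>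
        ((hFm n).sub (((BL_aesm_rpow (hwm n) hp0.le).add
          (BL_aesm_rpow (hzm n) hp0.le)).const_mul ε)).sup aestronglyMeasurable_const
      have hg0 : ∀ n x, 0 ≤ g n x := fun n x => le_max_right _ _
      have hgle : ∀ n x, g n x ≤ G x := by
        intro n x
        apply max_le _ (by positivity)
        have := key ε C₂ hC₂ n x
        simp only [hGdef]
        nlinarith
      have hgleF : ∀ n x, g n x ≤ F n x := by
        intro n x
        apply max_le _ (hF0 n x)
        have : 0 ≤ ε * (|u n x - u₀ x| ^ (α + β) + |v n x - v₀ x| ^ (α + β)) := by positivity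
        linarith
      have hgae : ∀ᵐ x ∂μ, Tendsto (fun n => g n x) atTop (𝓝 0) := by
        filter_upwards [hFae] with x hx
        exact squeeze_zero (fun n => hg0 n x) (fun n => hgleF n x) hx
      have hgint : ∀ n, Integrable (g n) μ := fun n =>
        Integrable.mono' hGint (hgm n) (by
          filter_upwards with x
          rw [Real.norm_eq_abs, abs_of_nonneg (hg0 n x)]
          exact hgle n x)
      have hgto : Tendsto (fun n => ∫ x, g n x ∂μ) atTop (𝓝 0) := by
        have hb : ∀ n, ∀ᵐ x ∂μ, ‖g n x‖ ≤ G x := by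
          intro n
          filter_upwards with x
          rw [Real.norm_eq_abs, abs_of_nonneg (hg0 n x)]
          exact hgle n x
        have h := tendsto_integral_of_dominated_convergence G hgm hGint hb hgae
        simpa using h
      have hFle2 : ∀ n, ∫ x, F n x ∂μ ≤ (∫ x, g n x ∂μ)
          + ε * ((∫ x, |u n x - u₀ x| ^ (α + β) ∂μ)
            + ∫ x, |v n x - v₀ x| ^ (α + β) ∂μ) := by
        intro n
        have i1 : Integrable
            (fun x => |u n x - u₀ x| ^ (α + β) + |v n x - v₀ x| ^ (α + β)) μ :=
          (hWp n).add (hZp n)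
        have i2 : Integrable
            (fun x => ε * (|u n x - u₀ x| ^ (α + β) + |v n x - v₀ x| ^ (α + β))) μ :=
          i1.const_mul ε
        have hint2 : Integrable (fun x => g n x
            + ε * (|u n x - u₀ x| ^ (α + β) + |v n x - v₀ x| ^ (α + β))) μ :=
          (hgint n).add i2
        have step : ∫ x, F n x ∂μ ≤ ∫ x, (g n x
            + ε * (|u n x - u₀ x| ^ (α + β) + |v n x - v₀ x| ^ (α + β))) ∂μ := by
          refine integral_mono (hFint n) hint2 fun x => ?_
          have hmax := le_max_left (F n x
            - ε * (|u n x - u₀ x| ^ (α + β) + |v n x - v₀ x| ^ (α + β))) 0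
          have : F n x - ε * (|u n x - u₀ x| ^ (α + β) + |v n x - v₀ x| ^ (α + β))
              ≤ g n x := hmax
          simp only []
          linarith
        rw [integral_add (hgint n) i2, integral_const_mul,
          integral_add (hWp n) (hZp n)] at step
        exact step
      have hεM : ε * (2 * M₁) ≤ a / 2 := by
        rw [hεdef, div_mul_eq_mul_div, div_le_div_iff₀ (by positivity) (by norm_num)]
        nlinarith
      filter_upwards [hgto.eventually_lt_const (show (0:ℝ) < a / 2 by linarith)] with n hn
      have h1 := hFle2 n
      have h2 : ε * ((∫ x, |u n x - u₀ x| ^ (α + β) ∂μ)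
          + ∫ x, |v n x - v₀ x| ^ (α + β) ∂μ) ≤ ε * (2 * M₁) := by
        apply mul_le_mul_of_nonneg_left _ hε.le
        linarith [hWint n, hZint n]
      linarith
  -- conclusion
  rw [tendsto_iff_norm_sub_tendsto_zero]
  refine squeeze_zero (fun n => norm_nonneg _) (fun n => ?_) hFto
  have hsub : (∫ x, (|u n x| ^ α * |v n x| ^ β
        - |u n x - u₀ x| ^ α * |v n x - v₀ x| ^ β) ∂μ)
      - ∫ x, |u₀ x| ^ α * |v₀ x| ^ β ∂μ
      = ∫ x, ((|u n x| ^ α * |v n x| ^ β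
        - |u n x - u₀ x| ^ α * |v n x - v₀ x| ^ β) - |u₀ x| ^ α * |v₀ x| ^ β) ∂μ :=
    (integral_sub ((hPn n).sub (hPw n)) hP0).symm
  rw [hsub]
  calc ‖∫ x, ((|u n x| ^ α * |v n x| ^ β
        - |u n x - u₀ x| ^ α * |v n x - v₀ x| ^ β) - |u₀ x| ^ α * |v₀ x| ^ β) ∂μ‖
      ≤ ∫ x, ‖(|u n x| ^ α * |v n x| ^ β
        - |u n x - u₀ x| ^ α * |v n x - v₀ x| ^ β) - |u₀ x| ^ α * |v₀ x| ^ β‖ ∂μ :=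
        norm_integral_le_integral_norm _
    _ = ∫ x, F n x ∂μ := by simp only [Real.norm_eq_abs, hFdef]
end
end

section
/- Nondegeneracy of the Lagrange multiplier system for ν < 0: let α, β > 1 with α + β = 2* , let ν < 0, and let U, V, W be positive reals satisfying U > α|ν|W and V > β|ν|W (here U, V, W play the roles of ∫|u|^{2*}, ∫|v|^{2*}, ∫|u|^α|v|^β). Then ((2*−2)U + α(2−α)|ν|W)·((2*−2)V + β(2−β)|ν|W) > (αβ|ν|W)². -/
open Real

noncomputable section

/-- Nondegeneracy of the Lagrange multiplier system for `ν < 0`: if `α, β > 1` with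
`α + β = 2* = 2N/(N-2)`, and `U, V, W > 0` satisfy `U > α|ν|W` and `V > β|ν|W`, then
`((2*−2)U + α(2−α)|ν|W)((2*−2)V + β(2−β)|ν|W) > (αβ|ν|W)²`. -/
theorem lagrange_nondegeneracy (N : ℕ) (hN : 3 ≤ N) (α β ν U V W : ℝ)
    (hα : 1 < α) (hβ : 1 < β) (hαβ : α + β = 2 * N / ((N : ℝ) - 2)) (hν : ν < 0)
    (hU : 0 < U) (hV : 0 < V) (hW : 0 < W)
    (h1 : α * |ν| * W < U) (h2 : β * |ν| * W < V) :
    (α * β * |ν| * W) ^ 2 <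
      ((2 * N / ((N : ℝ) - 2) - 2) * U + α * (2 - α) * |ν| * W) *
        ((2 * N / ((N : ℝ) - 2) - 2) * V + β * (2 - β) * |ν| * W) := by
  have hN2 : (0:ℝ) < (N:ℝ) - 2 := by
    have : (3:ℝ) ≤ (N:ℝ) := by exact_mod_cast hN
    linarith
  have hs : 2 < 2 * N / ((N : ℝ) - 2) := by
    rw [lt_div_iff₀ hN2]; linarith
  rw [← hαβ] at *
  have hwpos : 0 < |ν| * W := mul_pos (abs_pos.mpr hν.ne) hW
  have key1 : α * β * |ν| * W < (α + β - 2) * U + α * (2 - α) * |ν| * W := by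
    nlinarith [mul_pos (show (0:ℝ) < α + β - 2 by linarith)
      (show (0:ℝ) < U - α * |ν| * W by linarith)]
  have key2 : α * β * |ν| * W < (α + β - 2) * V + β * (2 - β) * |ν| * W := by
    nlinarith [mul_pos (show (0:ℝ) < α + β - 2 by linarith)
      (show (0:ℝ) < V - β * |ν| * W by linarith)]
  have hpos : 0 < α * β * |ν| * W := by
    have := abs_pos.mpr hν.ne
    positivity
  nlinarith [mul_lt_mul' key1.le key2 hpos.le (hpos.trans key1)]
end
end

section
/- Let N ≥ 3, 2* = 2N/(N-2), α, β > 1 with α + β = 2*, and ν < 0. Let A₁, A₂, B₁, B₂, C be positive reals satisfying B₁^α B₂^β > α^α β^β C^{2*} (with C = |ν|∫|u|^α|v|^β etc.). Then there exist t₁ > 0 and s₁ > 0 such that A₁ t₁^{2-α} = B₁ t₁^β − α C s₁^β and A₂ s₁^{2-β} = B₂ s₁^α − β C t₁^α. -/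
open Real

noncomputable section

set_option maxHeartbeats 1000000 in
/-- Projection onto the Nehari manifold for negative coupling: with `α, β > 1`,
`α + β = 2* = 2N/(N-2)`, `ν < 0`, and positive reals `A₁, A₂, B₁, B₂, C` satisfying
`B₁^α B₂^β > α^α β^β C^{2*}`, there exist `t₁, s₁ > 0` with
`A₁ t₁^{2-α} = B₁ t₁^β − α C s₁^β` and `A₂ s₁^{2-β} = B₂ s₁^α − β C t₁^α`. -/
theorem nehari_projection_negative_coupling (N : ℕ) (hN : 3 ≤ N)
    (α β ν A₁ A₂ B₁ B₂ C : ℝ)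
    (hα : 1 < α) (hβ : 1 < β) (hαβ : α + β = 2 * N / ((N : ℝ) - 2)) (hν : ν < 0)
    (hA₁ : 0 < A₁) (hA₂ : 0 < A₂) (hB₁ : 0 < B₁) (hB₂ : 0 < B₂) (hC : 0 < C)
    (hkey : α ^ α * β ^ β * C ^ (2 * N / ((N : ℝ) - 2)) < B₁ ^ α * B₂ ^ β) :
    ∃ t₁ s₁ : ℝ, 0 < t₁ ∧ 0 < s₁ ∧
      A₁ * t₁ ^ (2 - α) = B₁ * t₁ ^ β - α * C * s₁ ^ β ∧
      A₂ * s₁ ^ (2 - β) = B₂ * s₁ ^ α - β * C * t₁ ^ α := by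
  have hα0 : 0 < α := by linarith
  have hβ0 : 0 < β := by linarith
  have hN2 : (2:ℝ) < (N:ℝ) := by
    have : (3:ℝ) ≤ (N:ℝ) := by exact_mod_cast hN
    linarith
  set p : ℝ := 2 * N / ((N : ℝ) - 2) with hp
  have hp2 : 2 < p := by
    rw [hp, lt_div_iff₀ (by linarith)]
    linarith
  have hCp : C ^ p = C ^ α * C ^ β := by
    rw [← hαβ, Real.rpow_add hC]
  set g : ℝ → ℝ := fun x =>
    A₂ * B₁ * x ^ (2:ℝ) - A₂ * (α * C) * x ^ (2 + β) - A₁ * B₂ * x ^ p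
      + A₁ * (β * C) * x ^ β with hg
  set a : ℝ := (β * C / B₂) ^ α⁻¹ with ha
  set b : ℝ := (B₁ / (α * C)) ^ β⁻¹ with hb
  have ha0 : 0 < a := Real.rpow_pos_of_pos (by positivity) _
  have hb0 : 0 < b := Real.rpow_pos_of_pos (by positivity) _
  have haα : a ^ α = β * C / B₂ := Real.rpow_inv_rpow (by positivity) hα0.ne'
  have hbβ : b ^ β = B₁ / (α * C) := Real.rpow_inv_rpow (by positivity) hβ0.ne'
  set ε : ℝ := min a b / 2 with hε
  have hε0 : 0 < ε := by positivity
  have hεa : ε < a := by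
    rw [hε]; have := min_le_left a b; linarith
  have hεb : ε < b := by
    rw [hε]; have := min_le_right a b; linarith
  have hεα : ε ^ α < β * C / B₂ := by
    rw [← haα]; exact Real.rpow_lt_rpow hε0.le hεa hα0
  have hεβ : ε ^ β < B₁ / (α * C) := by
    rw [← hbβ]; exact Real.rpow_lt_rpow hε0.le hεb hβ0
  have hsplit : ∀ x : ℝ, 0 < x →
      g x = A₂ * x ^ (2:ℝ) * (B₁ - α * C * x ^ β)
        + A₁ * x ^ β * (β * C - B₂ * x ^ α) := by
    intro x hx
    have h1 : x ^ (2 + β) = x ^ (2:ℝ) * x ^ β := Real.rpow_add hx 2 β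
    have h2 : x ^ p = x ^ α * x ^ β := by rw [← hαβ, Real.rpow_add hx]
    rw [hg]; simp only []; rw [h1, h2]; ring
  have hgε : 0 < g ε := by
    rw [hsplit ε hε0]
    have h1 : 0 < B₁ - α * C * ε ^ β := by
      rw [lt_div_iff₀ (by positivity)] at hεβ
      nlinarith
    have h2 : 0 < β * C - B₂ * ε ^ α := by
      rw [lt_div_iff₀ (by positivity)] at hεα
      nlinarith
    have e2 : (0:ℝ) < ε ^ (2:ℝ) := Real.rpow_pos_of_pos hε0 _
    have eβ : (0:ℝ) < ε ^ β := Real.rpow_pos_of_pos hε0 _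
    positivity
  have hbα : 0 < b ^ α := Real.rpow_pos_of_pos hb0 _
  have hBbα : β * C < B₂ * b ^ α := by
    by_contra h
    push_neg at h
    have h' : (B₂ * b ^ α) ^ β ≤ (β * C) ^ β :=
      Real.rpow_le_rpow (by positivity) h hβ0.le
    have e1 : (b ^ α) ^ β = B₁ ^ α / (α ^ α * C ^ α) := by
      rw [← Real.rpow_mul hb0.le, hb, ← Real.rpow_mul (by positivity)]
      have : β⁻¹ * (α * β) = α := by field_simp
      rw [this, Real.div_rpow hB₁.le (by positivity), Real.mul_rpow hα0.le hC.le]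
    rw [Real.mul_rpow hB₂.le hbα.le, e1, Real.mul_rpow hβ0.le hC.le] at h'
    rw [hCp] at hkey
    have hαα : (0:ℝ) < α ^ α := Real.rpow_pos_of_pos hα0 _
    have hCα : (0:ℝ) < C ^ α := Real.rpow_pos_of_pos hC _
    rw [mul_div_assoc', div_le_iff₀ (by positivity)] at h'
    nlinarith [Real.rpow_pos_of_pos hβ0 β, Real.rpow_pos_of_pos hC β,
      Real.rpow_pos_of_pos hB₂ β, Real.rpow_pos_of_pos hB₁ α]
  have hgb : g b < 0 := by
    rw [hsplit b hb0, hbβ]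
    have h1 : B₁ - α * C * (B₁ / (α * C)) = 0 := by field_simp; ring
    rw [h1]
    have h2 : β * C - B₂ * b ^ α < 0 := by linarith
    have h3 : 0 < A₁ * (B₁ / (α * C)) := by positivity
    nlinarith
  -- continuity and IVT
  have hcont : ContinuousOn g (Set.Icc ε b) := by
    have hrp : ∀ e : ℝ, ContinuousOn (fun x : ℝ => x ^ e) (Set.Icc ε b) := by
      intro e x hx
      exact (Real.continuousAt_rpow_const x e
        (Or.inl (lt_of_lt_of_le hε0 hx.1).ne')).continuousWithinAt
    exact (((continuousOn_const.mul (hrp 2)).sub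
      (continuousOn_const.mul (hrp (2 + β)))).sub
      (continuousOn_const.mul (hrp p))).add (continuousOn_const.mul (hrp β))
  obtain ⟨l, hlmem, hgl⟩ := intermediate_value_Icc' hεb.le hcont ⟨hgb.le, hgε.le⟩
  have hl0 : 0 < l := lt_of_lt_of_le hε0 hlmem.1
  have hlβ0 : 0 < l ^ β := Real.rpow_pos_of_pos hl0 _
  have hD : 0 < B₁ - α * C * l ^ β := by
    rcases eq_or_lt_of_le hlmem.2 with heq | hlt
    · exfalso; rw [heq] at hgl; linarith
    · have hlb : l ^ β < b ^ β := Real.rpow_lt_rpow hl0.le hlt hβ0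
      rw [hbβ, lt_div_iff₀ (by positivity)] at hlb
      nlinarith
  set D : ℝ := B₁ - α * C * l ^ β with hDdef
  have hkey2 : A₂ * l ^ (2:ℝ) * D = A₁ * l ^ β * (B₂ * l ^ α - β * C) := by
    rw [hsplit l hl0] at hgl
    rw [hDdef]; linarith
  set t : ℝ := (A₁ / D) ^ (p - 2)⁻¹ with ht
  have ht0 : 0 < t := Real.rpow_pos_of_pos (by positivity) _
  have htp : t ^ (p - 2) = A₁ / D :=
    Real.rpow_inv_rpow (by positivity) (by linarith : p - 2 ≠ 0)
  refine ⟨t, l * t, ht0, by positivity, ?_, ?_⟩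
  · have hsβ : (l * t) ^ β = l ^ β * t ^ β := Real.mul_rpow hl0.le ht0.le
    have htβ : t ^ β = t ^ (2 - α) * t ^ (p - 2) := by
      rw [← Real.rpow_add ht0]
      congr 1
      linarith
    rw [hsβ, htβ, htp]
    field_simp
    rw [hDdef]
  · have hs2β : (l * t) ^ (2 - β) = l ^ (2 - β) * t ^ (2 - β) :=
      Real.mul_rpow hl0.le ht0.le
    have hsα : (l * t) ^ α = l ^ α * t ^ α := Real.mul_rpow hl0.le ht0.le
    have htα : t ^ α = t ^ (2 - β) * t ^ (p - 2) := by
      rw [← Real.rpow_add ht0]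
      congr 1
      linarith
    have hl2 : l ^ (2:ℝ) = l ^ (2 - β) * l ^ β := by
      rw [← Real.rpow_add hl0]
      norm_num
    have hkey3 : A₂ * l ^ (2 - β) * D = A₁ * (B₂ * l ^ α - β * C) := by
      apply mul_right_cancel₀ hlβ0.ne'
      rw [hl2] at hkey2
      linear_combination hkey2
    rw [hs2β, hsα, htα, htp]
    have hDne : D ≠ 0 := hD.ne'
    field_simp
    linear_combination hkey3 - A₂ * l ^ (2 - β) * hDdef
end
end

section
/- Explicit Hardy–Sobolev extremal: for N ≥ 3 and λ ∈ (0, Λ_N), let a_λ = (N−2)/2 − √(Λ_N − λ) and A(N,λ) = N(N−2−2a_λ)²/(N−2). Then the function z(x) = A(N,λ)^{(N-2)/4} / (|x|^{a_λ}(1 + |x|^{2 − 4a_λ/(N−2)})^{(N−2)/2}) is a positive classical solution of −Δz − (λ/|x|²) z = z^{2*−1} on ℝ^N \ {0}. -/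
open MeasureTheory Real Filter Topology Set

noncomputable section

/-- The Laplacian of `u : ℝ^N → ℝ`, as the trace of the second derivative. -/
def lap {N : ℕ} (u : EuclideanSpace ℝ (Fin N) → ℝ)
    (x : EuclideanSpace ℝ (Fin N)) : ℝ :=
  ∑ i : Fin N,
    iteratedFDeriv ℝ 2 u x ![EuclideanSpace.single i 1, EuclideanSpace.single i 1]

namespace HSaux

/-- `ψ(t) = C t^p (1+t^q)^s`, the radial profile in the variable `t = |x|²`. -/
def psi (C p q s t : ℝ) : ℝ := C * (t ^ p * (1 + t ^ q) ^ s)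

/-- First derivative of `psi`. -/
def psi1 (C p q s t : ℝ) : ℝ :=
  C * (p * (t ^ (p-1) * (1 + t ^ q) ^ s) + s*q * (t ^ (p+q-1) * (1 + t ^ q) ^ (s-1)))

/-- Second derivative of `psi`. -/
def psi2 (C p q s t : ℝ) : ℝ :=
  C * (p * ((p-1) * (t ^ (p-2) * (1 + t ^ q) ^ s) + s*q * (t ^ (p+q-2) * (1 + t ^ q) ^ (s-1)))
    + s*q * ((p+q-1) * (t ^ (p+q-2) * (1 + t ^ q) ^ (s-1))
        + (s-1)*q * (t ^ (p+2*q-2) * (1 + t ^ q) ^ (s-2))))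

lemma hasDerivAt_G (α β q t : ℝ) (ht : 0 < t) :
    HasDerivAt (fun t : ℝ => t ^ α * (1 + t ^ q) ^ β)
      (α * (t ^ (α-1) * (1 + t ^ q) ^ β) + β*q * (t ^ (α+q-1) * (1 + t ^ q) ^ (β-1))) t := by
  have hS : 0 < 1 + t ^ q := by positivity
  have h1 : HasDerivAt (fun t : ℝ => t ^ α) (α * t ^ (α-1)) t :=
    Real.hasDerivAt_rpow_const (Or.inl ht.ne')
  have hq : HasDerivAt (fun t : ℝ => 1 + t ^ q) (q * t ^ (q-1)) t :=
    (Real.hasDerivAt_rpow_const (Or.inl ht.ne')).const_add 1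
  have h2 : HasDerivAt (fun t : ℝ => (1 + t ^ q) ^ β)
      (β * (1 + t ^ q) ^ (β-1) * (q * t ^ (q-1))) t := by
    have := (Real.hasDerivAt_rpow_const (x := 1 + t ^ q) (p := β)
      (Or.inl hS.ne')).comp t hq
    exact this
  have := h1.fun_mul h2
  refine this.congr_deriv ?_
  have e1 : t ^ (α+q-1) = t ^ α * t ^ (q-1) := by
    rw [← Real.rpow_add ht]; ring_nf
  rw [e1]; ring

lemma hasDerivAt_psi (C p q s t : ℝ) (ht : 0 < t) :
    HasDerivAt (psi C p q s) (psi1 C p q s t) t := by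
  unfold psi psi1
  exact (hasDerivAt_G p s q t ht).const_mul C

lemma hasDerivAt_psi1 (C p q s t : ℝ) (ht : 0 < t) :
    HasDerivAt (psi1 C p q s) (psi2 C p q s t) t := by
  unfold psi1 psi2
  have h1 := (hasDerivAt_G (p-1) s q t ht).const_mul p
  have h2 := (hasDerivAt_G (p+q-1) (s-1) q t ht).const_mul (s*q)
  have := (h1.fun_add h2).const_mul C
  refine this.congr_deriv ?_
  ring_nf

lemma ode (N : ℕ) (hN : 3 ≤ N) (lam a : ℝ) (ha0 : 0 < a) (ha2 : 2*a < (N:ℝ)-2)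
    (hrel : lam = ((N:ℝ)-2)*a - a^2) (t : ℝ) (ht : 0 < t) :
    -(4*t*psi2 ((N * ((N:ℝ)-2-2*a)^2/((N:ℝ)-2)) ^ (((N:ℝ)-2)/4)) (-a/2) (1 - 2*a/((N:ℝ)-2)) (-(((N:ℝ)-2)/2)) t
        + 2*N*psi1 ((N * ((N:ℝ)-2-2*a)^2/((N:ℝ)-2)) ^ (((N:ℝ)-2)/4)) (-a/2) (1 - 2*a/((N:ℝ)-2)) (-(((N:ℝ)-2)/2)) t)
      - lam/t * psi ((N * ((N:ℝ)-2-2*a)^2/((N:ℝ)-2)) ^ (((N:ℝ)-2)/4)) (-a/2) (1 - 2*a/((N:ℝ)-2)) (-(((N:ℝ)-2)/2)) t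
    = (psi ((N * ((N:ℝ)-2-2*a)^2/((N:ℝ)-2)) ^ (((N:ℝ)-2)/4)) (-a/2) (1 - 2*a/((N:ℝ)-2)) (-(((N:ℝ)-2)/2)) t)
        ^ (2 * N / ((N : ℝ) - 2) - 1) := by
  have hn3 : (3:ℝ) ≤ (N:ℝ) := by exact_mod_cast hN
  have hn2 : (0:ℝ) < (N:ℝ) - 2 := by linarith
  set n : ℝ := (N:ℝ) with hn
  set p : ℝ := -a/2 with hp
  set q : ℝ := 1 - 2*a/(n-2) with hq
  set s : ℝ := -((n-2)/2) with hs
  set A : ℝ := N * (n-2-2*a)^2/(n-2) with hA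
  have hA0 : 0 < A := by
    have : 0 < n - 2 - 2*a := by linarith
    have hN0 : (0:ℝ) < N := by linarith
    positivity
  set C : ℝ := A ^ ((n-2)/4) with hC
  have hC0 : 0 < C := Real.rpow_pos_of_pos hA0 _
  have hS : 0 < 1 + t ^ q := by positivity
  have he1 : (n-2)/4 * (2*(N:ℝ)/(n-2) - 1) = (n-2)/4 + 1 := by
    field_simp; ring
  have he2 : p * (2*(N:ℝ)/(n-2) - 1) = (p-1) + q := by
    rw [hp, hq]; field_simp; ring
  have he3 : s * (2*(N:ℝ)/(n-2) - 1) = s - 2 := by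
    rw [hs]; field_simp; ring
  have hrhs : psi C p q s t ^ (2 * (N:ℝ) / (n - 2) - 1)
      = (C * A) * (t ^ (p-1) * t ^ q * (1 + t ^ q) ^ (s-2)) := by
    unfold psi
    rw [Real.mul_rpow (by positivity) (by positivity),
        Real.mul_rpow (by positivity) (by positivity),
        hC, ← Real.rpow_mul hA0.le, ← Real.rpow_mul ht.le, ← Real.rpow_mul hS.le,
        he1, he2, he3, Real.rpow_add hA0, Real.rpow_one, Real.rpow_add ht]
  rw [hrhs]
  have mulpow : ∀ u v : ℝ, u + 1 = v → t ^ u * t = t ^ v := by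
    intro u v huv
    have h := Real.rpow_add ht u 1
    rw [Real.rpow_one, huv] at h
    exact h.symm
  have addpow : ∀ u v w : ℝ, u + v = w → t ^ u * t ^ v = t ^ w := by
    intro u v w huv
    have h := Real.rpow_add ht u v
    rw [huv] at h
    exact h.symm
  have mulS : ∀ u v : ℝ, u + 1 = v → (1 + t ^ q) ^ u * (1 + t ^ q) = (1 + t ^ q) ^ v := by
    intro u v huv
    have h := Real.rpow_add hS u 1
    rw [Real.rpow_one, huv] at h
    exact h.symm
  have e0 : t ^ p = t ^ (p-1) * t := (mulpow (p-1) p (by ring)).symm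
  have e1 : t ^ (p-2) = t ^ (p-1) * t⁻¹ :=
    (eq_mul_inv_iff_mul_eq₀ ht.ne').mpr (mulpow (p-2) (p-1) (by ring))
  have e2 : t ^ (p+q-2) = t ^ (p-1) * t ^ q * t⁻¹ := by
    rw [eq_mul_inv_iff_mul_eq₀ ht.ne', mulpow (p+q-2) (p+q-1) (by ring),
      addpow (p-1) q (p+q-1) (by ring)]
  have e3 : t ^ (p+2*q-2) = t ^ (p-1) * t ^ q * t ^ q * t⁻¹ := by
    rw [eq_mul_inv_iff_mul_eq₀ ht.ne', mulpow (p+2*q-2) (p+2*q-1) (by ring),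
      addpow (p-1) q (p+q-1) (by ring), addpow (p+q-1) q (p+2*q-1) (by ring)]
  have e4 : t ^ (p+q-1) = t ^ (p-1) * t ^ q := (addpow (p-1) q (p+q-1) (by ring)).symm
  have f2 : (1 + t ^ q) ^ (s-1) = (1 + t ^ q) ^ (s-2) * (1 + t ^ q) :=
    (mulS (s-2) (s-1) (by ring)).symm
  have f1 : (1 + t ^ q) ^ s = (1 + t ^ q) ^ (s-2) * (1 + t ^ q) * (1 + t ^ q) := by
    rw [mulS (s-2) (s-1) (by ring), mulS (s-1) s (by ring)]
  unfold psi psi1 psi2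
  rw [e0, e1, e2, e3, e4, f1, f2, hrel]
  have hq0 : n - 2 ≠ 0 := hn2.ne'
  rw [hp, hq, hs, hA]
  field_simp
  ring

end HSaux

/-- **Explicit Hardy–Sobolev extremal** (Terracini): for `N ≥ 3`, `λ ∈ (0, Λ_N)`,
with `a_λ = (N−2)/2 − √(Λ_N − λ)` and `A(N,λ) = N(N−2−2a_λ)²/(N−2)`, the function
`z(x) = A(N,λ)^{(N−2)/4} / (|x|^{a_λ}(1 + |x|^{2−4a_λ/(N−2)})^{(N−2)/2})` is a
positive classical solution of `−Δz − (λ/|x|²)z = z^{2*−1}` on `ℝ^N \ {0}`. -/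
theorem explicit_hardy_sobolev_extremal (N : ℕ) (hN : 3 ≤ N) (lam : ℝ)
    (hlam : 0 < lam) (hlam' : lam < ((N : ℝ) - 2) ^ 2 / 4) :
    let a : ℝ := ((N : ℝ) - 2) / 2 - Real.sqrt (((N : ℝ) - 2) ^ 2 / 4 - lam)
    let A : ℝ := N * ((N : ℝ) - 2 - 2 * a) ^ 2 / ((N : ℝ) - 2)
    let z : EuclideanSpace ℝ (Fin N) → ℝ := fun x =>
      A ^ (((N : ℝ) - 2) / 4) /
        (‖x‖ ^ a * (1 + ‖x‖ ^ (2 - 4 * a / ((N : ℝ) - 2))) ^ (((N : ℝ) - 2) / 2))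
    ∀ x : EuclideanSpace ℝ (Fin N), x ≠ 0 →
      0 < z x ∧
      -lap z x - lam / ‖x‖ ^ 2 * z x = z x ^ (2 * N / ((N : ℝ) - 2) - 1) := by
  intro a A z x hx
  have hn3 : (3:ℝ) ≤ (N:ℝ) := by exact_mod_cast hN
  have hn2 : (0:ℝ) < (N:ℝ) - 2 := by linarith
  -- basic facts about a
  have hD : 0 < ((N:ℝ) - 2) ^ 2 / 4 - lam := by linarith
  have hsq : Real.sqrt (((N:ℝ) - 2) ^ 2 / 4 - lam) ^ 2 = ((N:ℝ) - 2) ^ 2 / 4 - lam :=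
    Real.sq_sqrt hD.le
  have hsqpos : 0 < Real.sqrt (((N:ℝ) - 2) ^ 2 / 4 - lam) := Real.sqrt_pos.mpr hD
  have hsqlt : Real.sqrt (((N:ℝ) - 2) ^ 2 / 4 - lam) < ((N:ℝ) - 2) / 2 := by
    rw [show ((N:ℝ)-2)/2 = Real.sqrt ((((N:ℝ)-2)/2)^2) by
      rw [Real.sqrt_sq (by linarith)]]
    apply Real.sqrt_lt_sqrt hD.le
    nlinarith
  have hadef : a = ((N : ℝ) - 2) / 2 - Real.sqrt (((N : ℝ) - 2) ^ 2 / 4 - lam) := rfl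
  have ha0 : 0 < a := by rw [hadef]; linarith
  have ha2 : 2*a < (N:ℝ)-2 := by rw [hadef]; linarith
  have hrel : lam = ((N:ℝ)-2)*a - a^2 := by
    rw [hadef]; nlinarith [hsq]
  have hAdef : A = N * ((N : ℝ) - 2 - 2 * a) ^ 2 / ((N : ℝ) - 2) := rfl
  set C : ℝ := ((N:ℝ) * ((N:ℝ)-2-2*a)^2/((N:ℝ)-2)) ^ (((N:ℝ)-2)/4) with hC
  set p : ℝ := -a/2 with hp
  set q : ℝ := 1 - 2*a/((N:ℝ)-2) with hq
  set s : ℝ := -(((N:ℝ)-2)/2) with hs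
  -- z agrees with the profile psi of |y|².
  have hzpsi : ∀ y : EuclideanSpace ℝ (Fin N), y ≠ 0 →
      z y = HSaux.psi C p q s (‖y‖^2) := by
    intro y hy
    have hr : 0 < ‖y‖ := norm_pos_iff.mpr hy
    have hb : (‖y‖^2 : ℝ) = ‖y‖ ^ ((2:ℕ):ℝ) := (Real.rpow_natCast _ 2).symm
    have hbp : (‖y‖^2 : ℝ) ^ p = (‖y‖ ^ a)⁻¹ := by
      rw [hb, ← Real.rpow_mul hr.le]
      rw [show ((2:ℕ):ℝ) * p = -a by rw [hp]; push_cast; ring]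
      exact Real.rpow_neg hr.le a
    have hbq : (‖y‖^2 : ℝ) ^ q = ‖y‖ ^ (2 - 4 * a / ((N : ℝ) - 2)) := by
      rw [hb, ← Real.rpow_mul hr.le]
      congr 1
      rw [hq]; push_cast; ring
    have hSy : (0:ℝ) < 1 + ‖y‖ ^ (2 - 4 * a / ((N : ℝ) - 2)) := by positivity
    have hbs : (1 + (‖y‖^2 : ℝ) ^ q) ^ s
        = ((1 + ‖y‖ ^ (2 - 4 * a / ((N : ℝ) - 2))) ^ (((N:ℝ)-2)/2))⁻¹ := by
      rw [hbq, hs, Real.rpow_neg hSy.le]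
    show A ^ (((N : ℝ) - 2) / 4) /
        (‖y‖ ^ a * (1 + ‖y‖ ^ (2 - 4 * a / ((N : ℝ) - 2))) ^ (((N : ℝ) - 2) / 2))
      = HSaux.psi C p q s (‖y‖^2)
    unfold HSaux.psi
    rw [hbp, hbs, hAdef, div_eq_mul_inv, mul_inv]
  have hr : 0 < ‖x‖ := norm_pos_iff.mpr hx
  have ht : (0:ℝ) < ‖x‖^2 := by positivity
  have hSx : (0:ℝ) < 1 + (‖x‖^2) ^ q := by positivity
  have hA0 : 0 < (N:ℝ) * ((N:ℝ)-2-2*a)^2/((N:ℝ)-2) := by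
    have h1 : 0 < (N:ℝ) - 2 - 2*a := by linarith
    have h2 : (0:ℝ) < N := by linarith
    positivity
  have hC0 : 0 < C := Real.rpow_pos_of_pos hA0 _
  have hpsipos : 0 < HSaux.psi C p q s (‖x‖^2) := by
    unfold HSaux.psi
    exact mul_pos hC0 (mul_pos (Real.rpow_pos_of_pos ht _) (Real.rpow_pos_of_pos hSx _))
  -- eventual equality of z with the profile
  have hev : ∀ y : EuclideanSpace ℝ (Fin N), y ≠ 0 →
      z =ᶠ[nhds y] fun w => HSaux.psi C p q s (‖w‖^2) := by
    intro y hy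
    refine Filter.eventually_of_mem (isOpen_compl_singleton.mem_nhds hy) ?_
    intro w hw
    exact hzpsi w hw
  -- first derivative of z
  have hns : ∀ y : EuclideanSpace ℝ (Fin N),
      HasFDerivAt (fun w : EuclideanSpace ℝ (Fin N) => ‖w‖ ^ 2) (2 • (innerSL ℝ) y) y :=
    fun y => (hasStrictFDerivAt_norm_sq y).hasFDerivAt
  have hzd : ∀ y : EuclideanSpace ℝ (Fin N), y ≠ 0 →
      HasFDerivAt z ((HSaux.psi1 C p q s (‖y‖^2)) • (2 • (innerSL ℝ) y)) y := by
    intro y hy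
    have hty : (0:ℝ) < ‖y‖^2 := by
      have : 0 < ‖y‖ := norm_pos_iff.mpr hy
      positivity
    have h := (HSaux.hasDerivAt_psi C p q s (‖y‖^2) hty).comp_hasFDerivAt y (hns y)
    exact h.congr_of_eventuallyEq (hev y hy)
  -- z is C² at x
  have hz2 : ContDiffAt ℝ 2 z x := by
    have h1 : ContDiffAt ℝ 2 (fun t : ℝ => t ^ p) (‖x‖^2) :=
      Real.contDiffAt_rpow_const_of_ne ht.ne'
    have hin : ContDiffAt ℝ 2 (fun t : ℝ => 1 + t ^ q) (‖x‖^2) :=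
      contDiffAt_const.add (Real.contDiffAt_rpow_const_of_ne ht.ne')
    have h2 : ContDiffAt ℝ 2 (fun t : ℝ => (1 + t ^ q) ^ s) (‖x‖^2) :=
      ContDiffAt.comp (‖x‖^2) (Real.contDiffAt_rpow_const_of_ne hSx.ne') hin
    have hpsiC : ContDiffAt ℝ 2 (HSaux.psi C p q s) (‖x‖^2) := by
      unfold HSaux.psi
      exact contDiffAt_const.mul (h1.mul h2)
    have hcomp : ContDiffAt ℝ 2
        (fun w : EuclideanSpace ℝ (Fin N) => HSaux.psi C p q s (‖w‖^2)) x :=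
      hpsiC.comp (f := fun w : EuclideanSpace ℝ (Fin N) => ‖w‖^2) x (contDiff_norm_sq ℝ).contDiffAt
    exact hcomp.congr_of_eventuallyEq (hev x hx)
  have hfd : DifferentiableAt ℝ (fderiv ℝ z) x :=
    (hz2.fderiv_right (m := 1) (by norm_num)).differentiableAt (by norm_num)
  -- the i-th second-derivative entry
  have hentry : ∀ i : Fin N,
      iteratedFDeriv ℝ 2 z x ![EuclideanSpace.single i 1, EuclideanSpace.single i 1]
        = 2 * HSaux.psi1 C p q s (‖x‖^2)
          + 4 * HSaux.psi2 C p q s (‖x‖^2) * (x i * x i) := by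
    intro i
    set e : EuclideanSpace ℝ (Fin N) := EuclideanSpace.single i 1 with he
    rw [iteratedFDeriv_two_apply]
    have hm0 : ![e, e] 0 = e := rfl
    have hm1 : ![e, e] 1 = e := rfl
    rw [hm0, hm1]
    -- reduce to a scalar function
    have hclm := fderiv_clm_apply (c := fderiv ℝ z) (u := fun _ => e) hfd
      (differentiableAt_const e)
    have hred : fderiv ℝ (fderiv ℝ z) x e e
        = fderiv ℝ (fun y => fderiv ℝ z y e) x e := by
      rw [hclm]
      simp
    rw [hred]
    -- the scalar function agrees with an explicit one near x
    have hgev : (fun y => fderiv ℝ z y e)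
        =ᶠ[nhds x] fun y => (2 * HSaux.psi1 C p q s (‖y‖^2)) * y i := by
      refine Filter.eventually_of_mem (isOpen_compl_singleton.mem_nhds hx) ?_
      intro w hw
      have h' := (hzd w hw).fderiv
      dsimp only
      rw [h']
      simp [he, EuclideanSpace.inner_single_right]
      ring
    rw [Filter.EventuallyEq.fderiv_eq hgev]
    -- differentiate the explicit function
    have hc : HasFDerivAt
        (fun y : EuclideanSpace ℝ (Fin N) => 2 * HSaux.psi1 C p q s (‖y‖^2))
        (((2:ℝ)) • ((HSaux.psi2 C p q s (‖x‖^2)) • (2 • (innerSL ℝ) x))) x :=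
      by have h := (HSaux.hasDerivAt_psi1 C p q s (‖x‖^2) ht).comp_hasFDerivAt x (hns x); exact h.const_mul 2
    have hproj : HasFDerivAt (fun y : EuclideanSpace ℝ (Fin N) => y i)
        (EuclideanSpace.proj i : EuclideanSpace ℝ (Fin N) →L[ℝ] ℝ) x :=
      (EuclideanSpace.proj i : EuclideanSpace ℝ (Fin N) →L[ℝ] ℝ).hasFDerivAt
    rw [(hc.fun_mul hproj).fderiv]
    simp [he, EuclideanSpace.inner_single_right, EuclideanSpace.single_apply]
    ring
  -- sum over the basis
  have hsum : ∑ i : Fin N, x i * x i = ‖x‖^2 := by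
    rw [EuclideanSpace.norm_eq, Real.sq_sqrt (by positivity)]
    simp [sq]
  have hlap : lap z x = 2*(N:ℝ)*HSaux.psi1 C p q s (‖x‖^2)
      + 4*(‖x‖^2)*HSaux.psi2 C p q s (‖x‖^2) := by
    unfold lap
    rw [Finset.sum_congr rfl (fun i _ => hentry i), Finset.sum_add_distrib,
      Finset.sum_const, ← Finset.mul_sum, hsum]
    simp [Finset.card_univ, nsmul_eq_mul]
    ring
  constructor
  · rw [hzpsi x hx]; exact hpsipos
  · rw [hzpsi x hx, hlap]
    have hode := HSaux.ode N hN lam a ha0 ha2 hrel (‖x‖^2) ht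
    rw [hC, hp, hq, hs]
    linarith [hode]
end
end
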